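/- arXiv:2208.07300 — 2 statements merged into one kernel-verified Lean document; each statement's English description precedes it below -/
import Mathlib

section
/- Let 𝓑 be a basis of a Banach space X and 𝐧 a strictly increasing sequence of positive integers. Then 𝓑 is (𝐧, almost greedy) if and only if 𝓑 is quasi-greedy and (𝐧, democratic). -/
open scoped BigOperators ENNReal NNReal

/-- The collection `𝕋(𝐧)`: pairs of finite sets `(A, D)` with `A ⊆ 𝐧`, `|A| ≤ |D|`
and `A < D ∩ 𝐧`. -/
def TPair (seq : ℕ → ℕ) (A D : Finset ℕ) : Prop :=
  (↑A : Set ℕ) ⊆ Set.range seq ∧ A.card ≤ D.card ∧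
    ∀ a ∈ A, ∀ d ∈ D, d ∈ Set.range seq → a < d

/-- The collection `𝕊(𝐧)`: pairs of finite sets `(A, D)` with `A ⊆ 𝐧` and `|A| ≤ |D|`. -/
def SPair (seq : ℕ → ℕ) (A D : Finset ℕ) : Prop :=
  (↑A : Set ℕ) ⊆ Set.range seq ∧ A.card ≤ D.card

/-- The interval `{n_{k+1}, …, n_{k+m}}` of `m` consecutive terms of the sequence `seq`
(0-indexed: `seq k, …, seq (k+m-1)`). -/
def intervalSet (seq : ℕ → ℕ) (k m : ℕ) : Finset ℕ :=
  (Finset.range m).image fun i => seq (k + i)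

/-- The (1-based) index `ι(max A)` of the largest element of `A` in the sequence `seq`
(`0` if `A` is empty). -/
noncomputable def iotaMax (seq : ℕ → ℕ) (A : Finset ℕ) : ℕ :=
  if h : A.Nonempty then sInf {i | seq i = A.max' h} + 1 else 0

/-- The collection `𝕋^ω(𝐧)`: pairs of finite sets `(A, D)` with `A ⊆ 𝐧`, `ω(A) ≤ ω(D)`
and `A < D ∩ 𝐧`. -/
def WTPair (w : Set ℕ → ℝ≥0∞) (seq : ℕ → ℕ) (A D : Finset ℕ) : Prop :=
  (↑A : Set ℕ) ⊆ Set.range seq ∧ w (↑A : Set ℕ) ≤ w (↑D : Set ℕ) ∧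
    ∀ a ∈ A, ∀ d ∈ D, d ∈ Set.range seq → a < d

/-- A (semi-normalized) basis `(e_n)` of a Banach space `X`, together with its biorthogonal
functionals `(e_n^*)`: the span of the `e_n` is norm-dense, `e_j^*(e_k) = δ_{jk}`, and the
norms of the `e_n` and `e_n^*` are bounded above and away from zero. -/
structure BasisOf (𝕜 : Type*) (X : Type*) [RCLike 𝕜] [NormedAddCommGroup X]
    [NormedSpace 𝕜 X] where
  e : ℕ → X
  coord : ℕ → X →L[𝕜] 𝕜
  dense_span : Dense (↑(Submodule.span 𝕜 (Set.range e)) : Set X)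
  biorth : ∀ j k : ℕ, coord j (e k) = if j = k then (1 : 𝕜) else 0
  norm_bounds : ∃ c₁ c₂ : ℝ, 0 < c₁ ∧ (∀ n, c₁ ≤ ‖e n‖ ∧ c₁ ≤ ‖coord n‖) ∧
    ∀ n, ‖e n‖ ≤ c₂ ∧ ‖coord n‖ ≤ c₂

namespace BasisOf

variable {𝕜 : Type*} {X : Type*} [RCLike 𝕜] [NormedAddCommGroup X] [NormedSpace 𝕜 X]
variable (B : BasisOf 𝕜 X)

/-- The projection `P_A(x) = ∑_{n ∈ A} e_n^*(x) e_n`. -/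
noncomputable def proj (A : Finset ℕ) (x : X) : X := ∑ n ∈ A, B.coord n x • B.e n

/-- `1_{εA} = ∑_{n ∈ A} ε_n e_n`. -/
noncomputable def sgnSum (ε : ℕ → 𝕜) (A : Finset ℕ) : X := ∑ n ∈ A, ε n • B.e n

/-- `1_A = ∑_{n ∈ A} e_n`. -/
noncomputable def ones (A : Finset ℕ) : X := ∑ n ∈ A, B.e n

/-- `P^𝐧_m(x) = ∑_{i=1}^m e_{n_i}^*(x) e_{n_i}`, the projection on the first `m` terms of the
subsequence given by `seq`. -/
noncomputable def projSeq (seq : ℕ → ℕ) (m : ℕ) (x : X) : X :=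
  ∑ i ∈ Finset.range m, B.coord (seq i) x • B.e (seq i)

/-- `A` is a greedy set of `x`: the coefficients inside `A` dominate those outside. -/
def IsGreedySet (x : X) (A : Finset ℕ) : Prop :=
  ∀ a ∈ A, ∀ b ∉ A, ‖B.coord b x‖ ≤ ‖B.coord a x‖

/-- The support `{n : e_n^*(x) ≠ 0}`. -/
def supp (x : X) : Set ℕ := {n | B.coord n x ≠ 0}

/-- `𝓑` is `C`-(`𝐧`, strong partially greedy):
`‖x - G_m(x)‖ ≤ C ⋅ σ̂^𝐧_m(x)` for all `x`, all `m ≥ 1` and all greedy sums. -/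
def SPGWith (seq : ℕ → ℕ) (C : ℝ) : Prop :=
  ∀ x : X, ∀ m : ℕ, 1 ≤ m → ∀ A : Finset ℕ, A.card = m → B.IsGreedySet x A →
    ∀ k : ℕ, k ≤ m → ‖x - B.proj A x‖ ≤ C * ‖x - B.projSeq seq k x‖

/-- `𝓑` is (`𝐧`, strong partially greedy). -/
def SPG (seq : ℕ → ℕ) : Prop := ∃ C : ℝ, 1 ≤ C ∧ B.SPGWith seq C

/-- `𝓑` is quasi-greedy with constant `C`. -/
def QuasiGreedyWith (C : ℝ) : Prop :=
  ∀ x : X, ∀ A : Finset ℕ, A.Nonempty → B.IsGreedySet x A → ‖B.proj A x‖ ≤ C * ‖x‖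

/-- `𝓑` is quasi-greedy. -/
def QuasiGreedy : Prop := ∃ C : ℝ, B.QuasiGreedyWith C

/-- `𝓑` is suppression quasi-greedy with constant `C`. -/
def SuppQGWith (C : ℝ) : Prop :=
  ∀ x : X, ∀ A : Finset ℕ, A.Nonempty → B.IsGreedySet x A → ‖x - B.proj A x‖ ≤ C * ‖x‖

/-- `𝓑` is `C`-(`𝐧`, PSLC). -/
def PSLCWith (seq : ℕ → ℕ) (C : ℝ) : Prop :=
  ∀ x : X, (∀ n, ‖B.coord n x‖ ≤ 1) → ∀ A D : Finset ℕ, TPair seq A D →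
    (∀ d ∈ D, B.coord d x = 0) →
    (∀ a ∈ A, ∀ j : ℕ, (j ∈ D ∨ B.coord j x ≠ 0) → j ∈ Set.range seq → a < j) →
    ∀ ε δ : ℕ → 𝕜, (∀ n, ‖ε n‖ = 1) → (∀ n, ‖δ n‖ = 1) →
      ‖x + B.sgnSum ε A‖ ≤ C * ‖x + B.sgnSum δ D‖

/-- `𝓑` is (`𝐧`, PSLC). -/
def PSLC (seq : ℕ → ℕ) : Prop := ∃ C : ℝ, 1 ≤ C ∧ B.PSLCWith seq C

/-- `𝓑` is (`𝐧`, superconservative) with constant `C`. -/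
def SuperconservativeWith (seq : ℕ → ℕ) (C : ℝ) : Prop :=
  ∀ A D : Finset ℕ, TPair seq A D →
    ∀ ε δ : ℕ → 𝕜, (∀ n, ‖ε n‖ = 1) → (∀ n, ‖δ n‖ = 1) →
      ‖B.sgnSum ε A‖ ≤ C * ‖B.sgnSum δ D‖

/-- `𝓑` is (`𝐧`, superconservative). -/
def Superconservative (seq : ℕ → ℕ) : Prop :=
  ∃ C : ℝ, 0 < C ∧ B.SuperconservativeWith seq C

/-- `𝓑` is (`𝐧`, conservative) with constant `C`. -/
def ConservativeWith (seq : ℕ → ℕ) (C : ℝ) : Prop :=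
  ∀ A D : Finset ℕ, TPair seq A D → ‖B.ones A‖ ≤ C * ‖B.ones D‖

/-- `𝓑` is (`𝐧`, conservative). -/
def Conservative (seq : ℕ → ℕ) : Prop := ∃ C : ℝ, 0 < C ∧ B.ConservativeWith seq C

/-- `𝓑` is (`𝐧`, democratic) with constant `C`. -/
def DemocraticWith (seq : ℕ → ℕ) (C : ℝ) : Prop :=
  ∀ A D : Finset ℕ, SPair seq A D → ‖B.ones A‖ ≤ C * ‖B.ones D‖

/-- `𝓑` is (`𝐧`, democratic). -/
def Democratic (seq : ℕ → ℕ) : Prop := ∃ C : ℝ, B.DemocraticWith seq C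

/-- `𝓑` is (`𝐧`, almost greedy) with constant `C`:
`‖x - G_m(x)‖ ≤ C σ̃^𝐧_m(x)` where `σ̃^𝐧_m(x) = inf {‖x - P_D(x)‖ : D ⊆ 𝐧, |D| = m}`. -/
def AlmostGreedyWith (seq : ℕ → ℕ) (C : ℝ) : Prop :=
  ∀ x : X, ∀ m : ℕ, 1 ≤ m → ∀ A : Finset ℕ, A.card = m → B.IsGreedySet x A →
    ∀ D : Finset ℕ, (↑D : Set ℕ) ⊆ Set.range seq → D.card = m →
      ‖x - B.proj A x‖ ≤ C * ‖x - B.proj D x‖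

/-- `𝓑` is (`𝐧`, almost greedy). -/
def AlmostGreedy (seq : ℕ → ℕ) : Prop := ∃ C : ℝ, 1 ≤ C ∧ B.AlmostGreedyWith seq C

/-- `𝓑` is 1-unconditional. -/
def OneUnconditional : Prop :=
  ∀ (F : Finset ℕ) (a b : ℕ → 𝕜), (∀ n, ‖a n‖ ≤ ‖b n‖) →
    ‖∑ n ∈ F, a n • B.e n‖ ≤ ‖∑ n ∈ F, b n • B.e n‖

/-- `𝓑` is `C`-(`𝐧`, consecutive almost greedy) of type I. -/
def CAGIWith (seq : ℕ → ℕ) (C : ℝ) : Prop :=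
  ∀ x : X, ∀ m : ℕ, 1 ≤ m → ∀ A : Finset ℕ, A.card = m → B.IsGreedySet x A →
    ∀ k : ℕ, ‖x - B.proj A x‖ ≤ C * ‖x - B.proj (intervalSet seq k m) x‖

/-- `𝓑` is `C`-(`𝐧`, consecutive almost greedy) of type II. -/
def CAGIIWith (seq : ℕ → ℕ) (C : ℝ) : Prop :=
  ∀ x : X, ∀ m : ℕ, 1 ≤ m → ∀ A : Finset ℕ, A.card = m → B.IsGreedySet x A →
    ∀ k p : ℕ, ((↑(intervalSet seq k p) : Set ℕ) ∩ B.supp x).ncard ≤ m →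
      ‖x - B.proj A x‖ ≤ C * ‖x - B.proj (intervalSet seq k p) x‖

/-- `𝓑` is `C`-(`𝐧`, RSLC). -/
def RSLCWith (seq : ℕ → ℕ) (C : ℝ) : Prop :=
  ∀ x : X, (∀ n, ‖B.coord n x‖ ≤ 1) → ∀ A D : Finset ℕ, SPair seq A D →
    (∀ d ∈ D, B.coord d x = 0) →
    (∀ j : ℕ, (j ∈ D ∨ B.coord j x ≠ 0) → j ∈ Set.range seq →
      (∀ a ∈ A, j < a) ∨ (∀ a ∈ A, a < j)) →
    ∀ ε δ : ℕ → 𝕜, (∀ n, ‖ε n‖ = 1) → (∀ n, ‖δ n‖ = 1) →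
      ‖x + B.sgnSum ε A‖ ≤ C * ‖x + B.sgnSum δ D‖

/-- `𝓑` is `C`-(`𝐧`, SLC). -/
def SLCWith (seq : ℕ → ℕ) (C : ℝ) : Prop :=
  ∀ x : X, (∀ n, ‖B.coord n x‖ ≤ 1) → ∀ A D : Finset ℕ, SPair seq A D →
    Disjoint A D → (∀ a ∈ A, B.coord a x = 0) → (∀ d ∈ D, B.coord d x = 0) →
    ∀ ε δ : ℕ → 𝕜, (∀ n, ‖ε n‖ = 1) → (∀ n, ‖δ n‖ = 1) →
      ‖x + B.sgnSum ε A‖ ≤ C * ‖x + B.sgnSum δ D‖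

/-- The Lebesgue-type parameter `L̂^𝐧_m`: the least constant `C ∈ [0,∞]` with
`‖x - G_m(x)‖ ≤ C σ̂^𝐧_m(x)` for all `x` and all greedy sums `G_m(x)`. -/
noncomputable def Lhat (seq : ℕ → ℕ) (m : ℕ) : ℝ≥0∞ :=
  sInf {C : ℝ≥0∞ | ∀ (x : X) (A : Finset ℕ), A.card = m → B.IsGreedySet x A →
    ∀ k : ℕ, k ≤ m →
      (‖x - B.proj A x‖₊ : ℝ≥0∞) ≤ C * (‖x - B.projSeq seq k x‖₊ : ℝ≥0∞)}

/-- The parameter `g_m^c`. -/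
noncomputable def gc (m : ℕ) : ℝ≥0∞ :=
  ⨆ (x : X) (_ : x ≠ 0) (A : Finset ℕ) (_ : A.card ≤ m) (_ : B.IsGreedySet x A),
    (‖x - B.proj A x‖₊ : ℝ≥0∞) / (‖x‖₊ : ℝ≥0∞)

/-- The parameter `g̃_m`. -/
noncomputable def gtilde (m : ℕ) : ℝ≥0∞ :=
  ⨆ (x : X) (_ : x ≠ 0) (A : Finset ℕ) (A' : Finset ℕ) (_ : A ⊆ A') (_ : A.card < A'.card)
    (_ : A'.card ≤ m) (_ : B.IsGreedySet x A) (_ : B.IsGreedySet x A'),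
    (‖B.proj A' x - B.proj A x‖₊ : ℝ≥0∞) / (‖x‖₊ : ℝ≥0∞)

/-- The parameter `sc^𝐧_m`. -/
noncomputable def scParam (seq : ℕ → ℕ) (m : ℕ) : ℝ≥0∞ :=
  ⨆ (A : Finset ℕ) (D : Finset ℕ) (_ : TPair seq A D) (_ : D.card ≤ m)
    (_ : ∀ a ∈ A, a ≤ seq (m - 1)) (ε : ℕ → 𝕜) (_ : ∀ n, ‖ε n‖ = 1)
    (δ : ℕ → 𝕜) (_ : ∀ n, ‖δ n‖ = 1),
    (‖B.sgnSum ε A‖₊ : ℝ≥0∞) / (‖B.sgnSum δ D‖₊ : ℝ≥0∞)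

/-- The parameter `ω^𝐧_m`. -/
noncomputable def omegaParam (seq : ℕ → ℕ) (m : ℕ) : ℝ≥0∞ :=
  ⨆ (x : X) (_ : ∀ n, ‖B.coord n x‖ ≤ 1) (A : Finset ℕ) (D : Finset ℕ)
    (_ : (↑A : Set ℕ) ⊆ Set.range seq) (_ : A.card ≤ D.card) (_ : D.card ≤ m)
    (_ : ∀ a ∈ A, a ≤ seq (m - 1)) (_ : ∀ d ∈ D, B.coord d x = 0)
    (_ : ∀ a ∈ A, ∀ j : ℕ, (j ∈ D ∨ B.coord j x ≠ 0) → j ∈ Set.range seq → a < j)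
    (ε : ℕ → 𝕜) (_ : ∀ n, ‖ε n‖ = 1) (δ : ℕ → 𝕜) (_ : ∀ n, ‖δ n‖ = 1),
    (‖x + B.sgnSum ε A‖₊ : ℝ≥0∞) / (‖x + B.sgnSum δ D‖₊ : ℝ≥0∞)

/-- The parameter `ω̂^𝐧_m`. -/
noncomputable def omegaHatParam (seq : ℕ → ℕ) (m : ℕ) : ℝ≥0∞ :=
  ⨆ (x : X) (_ : ∀ n, ‖B.coord n x‖ ≤ 1) (A : Finset ℕ) (D : Finset ℕ)
    (_ : (↑A : Set ℕ) ⊆ Set.range seq) (_ : A.card ≤ D.card) (_ : D.card ≤ m)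
    (_ : ∀ a ∈ A, a ≤ seq (m - 1))
    (_ : ∀ d ∈ D, B.coord d (x - B.proj A x) = 0)
    (_ : ∀ a ∈ A, ∀ j : ℕ, (j ∈ D ∨ B.coord j (x - B.proj A x) ≠ 0) →
      j ∈ Set.range seq → a < j)
    (ε : ℕ → 𝕜) (_ : ∀ n, ‖ε n‖ = 1),
    (‖x‖₊ : ℝ≥0∞) / (‖x - B.proj A x + B.sgnSum ε D‖₊ : ℝ≥0∞)

/-- `κ = sup_{j,k} ‖e_j‖ ‖e_k^*‖`. -/
noncomputable def kappa : ℝ≥0∞ :=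
  ⨆ (j : ℕ) (k : ℕ), ((‖B.e j‖₊ * ‖B.coord k‖₊ : ℝ≥0) : ℝ≥0∞)

/-- `𝓑` is `𝐬`-(`𝐧`, strong partially greedy) with constant `C`:
the strong partially greedy inequality for all orders `m` in the sequence `s`. -/
def SPGOnWith (seq : ℕ → ℕ) (s : ℕ → ℕ) (C : ℝ) : Prop :=
  ∀ x : X, ∀ i : ℕ, ∀ A : Finset ℕ, A.card = s i → B.IsGreedySet x A →
    ∀ k : ℕ, k ≤ s i → ‖x - B.proj A x‖ ≤ C * ‖x - B.projSeq seq k x‖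

/-- `𝓑` is (`λ`, `𝐧`, strong partially greedy). -/
def LamSPG (seq : ℕ → ℕ) (lam : ℝ) : Prop :=
  ∃ C : ℝ, 1 ≤ C ∧ ∀ x : X, ∀ m : ℕ, 1 ≤ m →
    ∀ A : Finset ℕ, A.card = ⌈lam * (m : ℝ)⌉₊ → B.IsGreedySet x A →
      ∀ k : ℕ, k ≤ m → ‖x - B.proj A x‖ ≤ C * ‖x - B.projSeq seq k x‖

/-- `𝓑` is (`λ`, `𝐧`, PSLC). -/
def LamPSLC (seq : ℕ → ℕ) (lam : ℝ) : Prop :=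
  ∃ C : ℝ, 1 ≤ C ∧ ∀ x : X, (∀ n, ‖B.coord n x‖ ≤ 1) →
    ∀ A D : Finset ℕ, (↑A : Set ℕ) ⊆ Set.range seq → A.card ≤ D.card →
      (lam - 1) * (iotaMax seq A : ℝ) + A.card ≤ D.card →
      (∀ d ∈ D, B.coord d x = 0) →
      (∀ a ∈ A, ∀ j : ℕ, (j ∈ D ∨ B.coord j x ≠ 0) → j ∈ Set.range seq → a < j) →
      ∀ ε δ : ℕ → 𝕜, (∀ n, ‖ε n‖ = 1) → (∀ n, ‖δ n‖ = 1) →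
        ‖x + B.sgnSum ε A‖ ≤ C * ‖x + B.sgnSum δ D‖

/-- `𝓑` is (`λ`, `𝐧`, superconservative). -/
def LamSuperconservative (seq : ℕ → ℕ) (lam : ℝ) : Prop :=
  ∃ C : ℝ, 0 < C ∧ ∀ A D : Finset ℕ, TPair seq A D →
    (lam - 1) * (iotaMax seq A : ℝ) + A.card ≤ D.card →
    ∀ ε δ : ℕ → 𝕜, (∀ n, ‖ε n‖ = 1) → (∀ n, ‖δ n‖ = 1) →
      ‖B.sgnSum ε A‖ ≤ C * ‖B.sgnSum δ D‖

/-- `𝓑` is (`λ`, `𝐧`, conservative). -/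
def LamConservative (seq : ℕ → ℕ) (lam : ℝ) : Prop :=
  ∃ C : ℝ, 0 < C ∧ ∀ A D : Finset ℕ, TPair seq A D →
    (lam - 1) * (iotaMax seq A : ℝ) + A.card ≤ D.card →
    ‖B.ones A‖ ≤ C * ‖B.ones D‖

/-- `𝓑` is `ω`-(`𝐧`, strong partially greedy) for the weight on sets `w`. -/
def WSPG (seq : ℕ → ℕ) (w : Set ℕ → ℝ≥0∞) : Prop :=
  ∃ C : ℝ, 1 ≤ C ∧ ∀ x : X, ∀ m : ℕ, 1 ≤ m → ∀ A : Finset ℕ, A.card = m →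
    B.IsGreedySet x A → ∀ m' : ℕ,
      w (↑((Finset.range m').image seq \ A) : Set ℕ) ≤
        w (↑(A \ (Finset.range m').image seq) : Set ℕ) →
      ‖x - B.proj A x‖ ≤ C * ‖x - B.proj ((Finset.range m').image seq) x‖

/-- `𝓑` is `ω`-(`𝐧`, PSLC). -/
def WPSLC (seq : ℕ → ℕ) (w : Set ℕ → ℝ≥0∞) : Prop :=
  ∃ C : ℝ, 1 ≤ C ∧ ∀ x : X, (∀ n, ‖B.coord n x‖ ≤ 1) →
    ∀ A D : Finset ℕ, WTPair w seq A D →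
      (∀ d ∈ D, B.coord d x = 0) →
      (∀ a ∈ A, ∀ j : ℕ, (j ∈ D ∨ B.coord j x ≠ 0) → j ∈ Set.range seq → a < j) →
      ∀ ε δ : ℕ → 𝕜, (∀ n, ‖ε n‖ = 1) → (∀ n, ‖δ n‖ = 1) →
        ‖x + B.sgnSum ε A‖ ≤ C * ‖x + B.sgnSum δ D‖

/-- `𝓑` is `ω`-(`𝐧`, superconservative). -/
def WSuperconservative (seq : ℕ → ℕ) (w : Set ℕ → ℝ≥0∞) : Prop :=
  ∃ C : ℝ, 0 < C ∧ ∀ A D : Finset ℕ, WTPair w seq A D →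
    ∀ ε δ : ℕ → 𝕜, (∀ n, ‖ε n‖ = 1) → (∀ n, ‖δ n‖ = 1) →
      ‖B.sgnSum ε A‖ ≤ C * ‖B.sgnSum δ D‖

/-- `𝓑` is `ω`-(`𝐧`, conservative). -/
def WConservative (seq : ℕ → ℕ) (w : Set ℕ → ℝ≥0∞) : Prop :=
  ∃ C : ℝ, 0 < C ∧ ∀ A D : Finset ℕ, WTPair w seq A D → ‖B.ones A‖ ≤ C * ‖B.ones D‖

end BasisOf

/-- A Banach space over `𝕜` equipped with a basis. -/
structure BanachWithBasis (𝕜 : Type*) [RCLike 𝕜] where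
  carrier : Type
  [grp : NormedAddCommGroup carrier]
  [mod : NormedSpace 𝕜 carrier]
  [comp : CompleteSpace carrier]
  basis : BasisOf 𝕜 carrier

attribute [instance] BanachWithBasis.grp BanachWithBasis.mod BanachWithBasis.comp

section AGAux

open Finset

variable {𝕜 X : Type*} [RCLike 𝕜] [NormedAddCommGroup X] [NormedSpace 𝕜 X]

namespace BasisOf

variable (B : BasisOf 𝕜 X)

lemma coord_finsum (n : ℕ) (S : Finset ℕ) (f : ℕ → 𝕜) :
    B.coord n (∑ k ∈ S, f k • B.e k) = if n ∈ S then f n else 0 := by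
  rw [map_sum]
  have h : ∀ k ∈ S, B.coord n (f k • B.e k) = if n = k then f k else 0 := by
    intro k _
    rw [map_smul, B.biorth n k]
    by_cases h : n = k <;> simp [h]
  rw [Finset.sum_congr rfl h, Finset.sum_ite_eq]

lemma ones_eq_sgnSum (S : Finset ℕ) : B.ones S = B.sgnSum (fun _ => (1 : 𝕜)) S := by
  simp [BasisOf.ones, BasisOf.sgnSum]

lemma coord_sgnSum (n : ℕ) (ε : ℕ → 𝕜) (S : Finset ℕ) :
    B.coord n (B.sgnSum ε S) = if n ∈ S then ε n else 0 := B.coord_finsum n S ε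

lemma coord_ones (n : ℕ) (S : Finset ℕ) :
    B.coord n (B.ones S) = if n ∈ S then 1 else 0 := by
  rw [B.ones_eq_sgnSum, B.coord_sgnSum]

lemma coord_proj (n : ℕ) (S : Finset ℕ) (x : X) :
    B.coord n (B.proj S x) = if n ∈ S then B.coord n x else 0 :=
  B.coord_finsum n S _

lemma proj_finsum {S T : Finset ℕ} (h : S ⊆ T) (f : ℕ → 𝕜) :
    B.proj S (∑ k ∈ T, f k • B.e k) = ∑ k ∈ S, f k • B.e k := by
  unfold BasisOf.proj
  refine Finset.sum_congr rfl fun n hn => ?_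
  rw [B.coord_finsum, if_pos (h hn)]

lemma proj_sgnSum {S T : Finset ℕ} (h : S ⊆ T) (ε : ℕ → 𝕜) :
    B.proj S (B.sgnSum ε T) = B.sgnSum ε S := B.proj_finsum h ε

lemma proj_ones {S T : Finset ℕ} (h : S ⊆ T) :
    B.proj S (B.ones T) = B.ones S := by
  rw [B.ones_eq_sgnSum, B.proj_sgnSum h, B.ones_eq_sgnSum]

lemma proj_congr {S : Finset ℕ} {x y : X}
    (h : ∀ n ∈ S, B.coord n x = B.coord n y) : B.proj S x = B.proj S y :=
  Finset.sum_congr rfl fun n hn => by rw [h n hn]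

lemma proj_sub (S : Finset ℕ) (x y : X) :
    B.proj S (x - y) = B.proj S x - B.proj S y := by
  unfold BasisOf.proj
  rw [← Finset.sum_sub_distrib]
  exact Finset.sum_congr rfl fun n _ => by rw [map_sub, sub_smul]

lemma proj_union_disjoint {S T : Finset ℕ} (h : Disjoint S T) (x : X) :
    B.proj (S ∪ T) x = B.proj S x + B.proj T x :=
  Finset.sum_union h

lemma ones_union_disjoint {S T : Finset ℕ} (h : Disjoint S T) :
    B.ones (S ∪ T) = B.ones S + B.ones T :=
  Finset.sum_union h

lemma isGreedySet_sgnSum {ε : ℕ → 𝕜} (hε : ∀ n, ‖ε n‖ = 1) {S T : Finset ℕ}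
    (h : S ⊆ T) : B.IsGreedySet (B.sgnSum ε T) S := by
  intro a ha b _
  rw [B.coord_sgnSum, B.coord_sgnSum, if_pos (h ha)]
  by_cases hb : b ∈ T <;> simp [hb, hε]

lemma isGreedySet_ones {S T : Finset ℕ} (h : S ⊆ T) :
    B.IsGreedySet (B.ones T) S := by
  rw [B.ones_eq_sgnSum]
  exact B.isGreedySet_sgnSum (by simp) h

lemma norm_coord_le_mul {c₂ : ℝ} (hc : ∀ n, ‖B.e n‖ ≤ c₂ ∧ ‖B.coord n‖ ≤ c₂)
    (n : ℕ) (x : X) : ‖B.coord n x‖ ≤ c₂ * ‖x‖ :=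
  le_trans ((B.coord n).le_opNorm x)
    (mul_le_mul_of_nonneg_right (hc n).2 (norm_nonneg x))

/-- far-out subsets of the range of `seq` avoiding a finite set -/
lemma exists_fresh {seq : ℕ → ℕ} (hseq : StrictMono seq) (F : Finset ℕ) (m : ℕ) :
    ∃ E : Finset ℕ, E.card = m ∧ (↑E : Set ℕ) ⊆ Set.range seq ∧ ∀ n ∈ E, n ∉ F := by
  classical
  set N := F.sup id + 1 with hN
  have hinj : Function.Injective (fun i => seq (N + i)) := by
    intro i j hij
    have := hseq.injective hij
    omega
  refine ⟨(Finset.range m).image (fun i => seq (N + i)), ?_, ?_, ?_⟩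
  · rw [Finset.card_image_of_injective _ hinj, Finset.card_range]
  · intro x hx
    simp only [Finset.coe_image, Set.mem_image, Finset.mem_coe, Finset.mem_range] at hx
    obtain ⟨i, _, rfl⟩ := hx
    exact ⟨N + i, rfl⟩
  · intro n hn hnF
    simp only [Finset.mem_image, Finset.mem_range] at hn
    obtain ⟨i, _, rfl⟩ := hn
    have h1 : N + i ≤ seq (N + i) := hseq.le_apply
    have h2 : seq (N + i) ≤ F.sup id := Finset.le_sup (f := id) hnF
    omega

/-- the coordinates of any vector are eventually small -/
lemma exists_coord_small (x : X) {δ : ℝ} (hδ : 0 < δ) :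
    ∃ F : Finset ℕ, ∀ n, n ∉ F → ‖B.coord n x‖ ≤ δ := by
  classical
  obtain ⟨c₁, c₂, hc₁, hlow, hhigh⟩ := B.norm_bounds
  have hc₂ : 0 < c₂ := lt_of_lt_of_le hc₁ (le_trans (hlow 0).1 (hhigh 0).1)
  obtain ⟨z, hz, hdist⟩ := B.dense_span.exists_dist_lt x (div_pos hδ hc₂)
  obtain ⟨c, hc⟩ := Finsupp.mem_span_range_iff_exists_finsupp.mp hz
  refine ⟨c.support, fun n hn => ?_⟩
  have hzn : B.coord n z = 0 := by
    rw [← hc, Finsupp.sum]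
    rw [B.coord_finsum, if_neg hn]
  have : B.coord n x = B.coord n (x - z) := by rw [map_sub, hzn, sub_zero]
  rw [this]
  calc ‖B.coord n (x - z)‖ ≤ c₂ * ‖x - z‖ :=
        B.norm_coord_le_mul (fun n => hhigh n) n (x - z)
  _ ≤ c₂ * (δ / c₂) := by
      refine mul_le_mul_of_nonneg_left ?_ hc₂.le
      rw [← dist_eq_norm]
      exact hdist.le
  _ = δ := by field_simp

lemma norm_proj_le {c₂ : ℝ} (hc : ∀ n, ‖B.e n‖ ≤ c₂ ∧ ‖B.coord n‖ ≤ c₂)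
    (hc₂ : 0 ≤ c₂) (S : Finset ℕ) (x : X) {δ : ℝ}
    (hδ : ∀ n ∈ S, ‖B.coord n x‖ ≤ δ) (hδ0 : 0 ≤ δ) :
    ‖B.proj S x‖ ≤ S.card * (δ * c₂) := by
  calc ‖B.proj S x‖ ≤ ∑ n ∈ S, ‖B.coord n x • B.e n‖ := norm_sum_le _ _
  _ ≤ ∑ _n ∈ S, δ * c₂ := by
      refine Finset.sum_le_sum fun n hn => ?_
      rw [norm_smul]
      exact mul_le_mul (hδ n hn) (hc n).1 (norm_nonneg _) hδ0
  _ = S.card * (δ * c₂) := by rw [Finset.sum_const, nsmul_eq_mul]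

/-- almost greedy implies quasi-greedy -/
lemma qg_of_ag {seq : ℕ → ℕ} (hseq : StrictMono seq) {C : ℝ} (hC1 : 1 ≤ C)
    (hAG : B.AlmostGreedyWith seq C) : B.QuasiGreedyWith (1 + C) := by
  intro x A hAne hA
  have hm : 1 ≤ A.card := Finset.card_pos.mpr hAne
  have key : ‖x - B.proj A x‖ ≤ C * ‖x‖ := by
    refine le_of_forall_pos_le_add fun δ hδ => ?_
    obtain ⟨c₁, c₂, hc₁, hlow, hhigh⟩ := B.norm_bounds
    have hc₂ : 0 < c₂ := lt_of_lt_of_le hc₁ (le_trans (hlow 0).1 (hhigh 0).1)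
    have hCpos : 0 < C := lt_of_lt_of_le one_pos hC1
    set δ₀ : ℝ := δ / (C * (A.card * c₂ + 1)) with hδ₀def
    have hδ₀ : 0 < δ₀ := by positivity
    obtain ⟨F, hF⟩ := B.exists_coord_small x hδ₀
    obtain ⟨E, hEcard, hEsub, hEF⟩ := exists_fresh hseq F A.card
    have h1 := hAG x A.card hm A rfl hA E hEsub hEcard
    have h2 : ‖B.proj E x‖ ≤ E.card * (δ₀ * c₂) :=
      B.norm_proj_le (fun n => hhigh n) hc₂.le E x
        (fun n hn => hF n (hEF n hn)) hδ₀.le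
    have h3 : ‖x - B.proj E x‖ ≤ ‖x‖ + E.card * (δ₀ * c₂) := by
      calc ‖x - B.proj E x‖ ≤ ‖x‖ + ‖B.proj E x‖ := norm_sub_le _ _
      _ ≤ _ := by linarith
    calc ‖x - B.proj A x‖ ≤ C * (‖x‖ + E.card * (δ₀ * c₂)) :=
          le_trans h1 (mul_le_mul_of_nonneg_left h3 hCpos.le)
    _ ≤ ‖x‖ * C + δ := by
        rw [hEcard]
        have : C * (A.card * (δ₀ * c₂)) ≤ δ := by
          rw [hδ₀def]
          rw [div_eq_mul_inv]
          have hpos : (0:ℝ) < C * ((A.card : ℝ) * c₂ + 1) := by positivity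
          calc C * ((A.card:ℝ) * (δ * (C * ((A.card:ℝ) * c₂ + 1))⁻¹ * c₂))
              = δ * ((C * ((A.card:ℝ) * c₂)) * (C * ((A.card:ℝ) * c₂ + 1))⁻¹) := by ring
          _ ≤ δ * 1 := by
              refine mul_le_mul_of_nonneg_left ?_ hδ.le
              rw [mul_inv_le_iff₀ hpos, one_mul]
              nlinarith [Nat.cast_nonneg (α := ℝ) A.card, hc₂.le]
          _ = δ := mul_one δ
        nlinarith
    _ = C * ‖x‖ + δ := by ring
  calc ‖B.proj A x‖ = ‖x - (x - B.proj A x)‖ := by rw [sub_sub_cancel]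
  _ ≤ ‖x‖ + ‖x - B.proj A x‖ := norm_sub_le _ _
  _ ≤ ‖x‖ + C * ‖x‖ := by linarith
  _ = (1 + C) * ‖x‖ := by ring

/-- almost greedy implies democratic -/
lemma dem_of_ag {seq : ℕ → ℕ} (hseq : StrictMono seq) {C : ℝ} (hC1 : 1 ≤ C)
    (hAG : B.AlmostGreedyWith seq C) : B.DemocraticWith seq (C * C) := by
  classical
  rintro A D ⟨hAsub, hcard⟩
  rcases A.eq_empty_or_nonempty with rfl | hAne
  · simp only [BasisOf.ones, Finset.sum_empty, norm_zero]
    positivity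
  have hm : 1 ≤ D.card := le_trans (Finset.card_pos.mpr hAne) hcard
  set m := D.card with hmdef
  -- fresh set E of size m avoiding A ∪ D
  obtain ⟨E, hEcard, hEsub, hEav⟩ := exists_fresh hseq (A ∪ D) m
  have hEA : Disjoint A E := by
    rw [Finset.disjoint_right]
    intro n hn hnA
    exact hEav n hn (Finset.mem_union_left _ hnA)
  have hED : Disjoint E D := by
    rw [Finset.disjoint_left]
    intro n hn hnD
    exact hEav n hn (Finset.mem_union_right _ hnD)
  -- subset E' of E of size m - |A|
  obtain ⟨E', hE'sub, hE'card⟩ := Finset.exists_subset_card_eq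
    (show m - A.card ≤ E.card by rw [hEcard]; omega)
  -- step 1 : ‖ones A‖ ≤ C * ‖ones (E \ E')‖
  have step1 : ‖B.ones A‖ ≤ C * ‖B.ones (E \ E')‖ := by
    set x := B.ones (A ∪ E) with hx
    have hgrE : B.IsGreedySet x E := B.isGreedySet_ones Finset.subset_union_right
    have hD'card : (A ∪ E').card = m := by
      rw [Finset.card_union_of_disjoint (Finset.disjoint_of_subset_right hE'sub hEA)]
      rw [hE'card]
      omega
    have hD'sub : (↑(A ∪ E') : Set ℕ) ⊆ Set.range seq := by
      rw [Finset.coe_union]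
      exact Set.union_subset hAsub (le_trans (Finset.coe_subset.mpr hE'sub) hEsub)
    have h1 := hAG x m hm E (by rw [hEcard]) hgrE (A ∪ E') hD'sub hD'card
    have e1 : x - B.proj E x = B.ones A := by
      rw [hx, B.proj_ones Finset.subset_union_right,
        B.ones_union_disjoint hEA, add_sub_cancel_right]
    have e2 : x - B.proj (A ∪ E') x = B.ones (E \ E') := by
      have hsub : A ∪ E' ⊆ A ∪ E := Finset.union_subset_union_right hE'sub
      rw [hx, B.proj_ones hsub]
      have hsplit : A ∪ E = (A ∪ E') ∪ (E \ E') := by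
        ext n
        simp only [Finset.mem_union, Finset.mem_sdiff]
        constructor
        · rintro (h | h)
          · exact Or.inl (Or.inl h)
          · by_cases h' : n ∈ E'
            · exact Or.inl (Or.inr h')
            · exact Or.inr ⟨h, h'⟩
        · rintro ((h | h) | ⟨h, _⟩)
          · exact Or.inl h
          · exact Or.inr (hE'sub h)
          · exact Or.inr h
      have hdisj : Disjoint (A ∪ E') (E \ E') := by
        rw [Finset.disjoint_union_left]
        constructor
        · exact Finset.disjoint_of_subset_right (Finset.sdiff_subset) hEA
        · exact Finset.disjoint_sdiff
      rw [hsplit, B.ones_union_disjoint hdisj, add_sub_cancel_left]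
    rw [e1, e2] at h1
    exact h1
  -- step 2 : ‖ones (E \ E')‖ ≤ C * ‖ones D‖
  set F := E \ E' with hF
  have hFcard : F.card = A.card := by
    rw [hF, Finset.card_sdiff_of_subset hE'sub, hEcard, hE'card]
    omega
  obtain ⟨F'', hF''card, hF''sub, hF''av⟩ := exists_fresh hseq (F ∪ D) (m - F.card)
  have hFD : Disjoint F D := Finset.disjoint_of_subset_left (Finset.sdiff_subset) hED
  have hF''F : Disjoint F F'' := by
    rw [Finset.disjoint_right]
    intro n hn hnF
    exact hF''av n hn (Finset.mem_union_left _ hnF)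
  have hF''D : Disjoint F'' D := by
    rw [Finset.disjoint_left]
    intro n hn hnD
    exact hF''av n hn (Finset.mem_union_right _ hnD)
  have step2 : ‖B.ones F‖ ≤ C * ‖B.ones D‖ := by
    set y := B.ones (F ∪ D) with hy
    have hgrD : B.IsGreedySet y D := B.isGreedySet_ones Finset.subset_union_right
    have hD''card : (F ∪ F'').card = m := by
      rw [Finset.card_union_of_disjoint hF''F, hF''card, hFcard]
      omega
    have hD''sub : (↑(F ∪ F'') : Set ℕ) ⊆ Set.range seq := by
      rw [Finset.coe_union]
      refine Set.union_subset (le_trans ?_ hEsub) hF''sub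
      exact Finset.coe_subset.mpr Finset.sdiff_subset
    have h2 := hAG y m hm D rfl hgrD (F ∪ F'') hD''sub hD''card
    have e1 : y - B.proj D y = B.ones F := by
      rw [hy, B.proj_ones Finset.subset_union_right,
        Finset.union_comm F D, B.ones_union_disjoint hFD.symm, add_sub_cancel_left]
    have e2 : y - B.proj (F ∪ F'') y = B.ones D := by
      have hproj : B.proj (F ∪ F'') y = B.ones F := by
        unfold BasisOf.proj
        have : ∀ n ∈ F ∪ F'', B.coord n y • B.e n =
            if n ∈ F then B.e n else 0 := by
          intro n hn
          rw [hy, B.coord_ones]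
          rcases Finset.mem_union.mp hn with h | h
          · rw [if_pos (Finset.mem_union_left _ h), if_pos h, one_smul]
          · have hnF : n ∉ F := Finset.disjoint_right.mp hF''F h
            have hnD : n ∉ D := Finset.disjoint_left.mp hF''D h
            rw [if_neg (by simp [hnF, hnD]), if_neg hnF, zero_smul]
        rw [Finset.sum_congr rfl this, Finset.sum_ite_mem]
        have : (F ∪ F'') ∩ F = F := by
          rw [Finset.inter_eq_right]
          exact Finset.subset_union_left
        rw [this]
        rfl
      rw [hproj, hy, B.ones_union_disjoint hFD, add_sub_cancel_left]
    rw [e1, e2] at h2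
    exact h2
  calc ‖B.ones A‖ ≤ C * ‖B.ones F‖ := step1
  _ ≤ C * (C * ‖B.ones D‖) := mul_le_mul_of_nonneg_left step2 (by linarith)
  _ = C * C * ‖B.ones D‖ := by ring

end BasisOf

/- list helper lemmas -/

lemma AG_list_sum_range {M : Type*} [AddCommMonoid M] (f : ℕ → M) : ∀ (l : List ℕ),
    (l.map f).sum = ∑ i ∈ Finset.range l.length, f (l.getD i 0)
  | [] => by simp
  | (a :: l) => by
    rw [List.map_cons, List.sum_cons, List.length_cons, Finset.sum_range_succ',
      AG_list_sum_range f l]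
    simp [add_comm]

lemma AG_sum_toFinset_range {M : Type*} [AddCommMonoid M] (l : List ℕ) (hl : l.Nodup)
    (f : ℕ → M) :
    ∑ n ∈ l.toFinset, f n = ∑ i ∈ Finset.range l.length, f (l.getD i 0) := by
  rw [List.sum_toFinset f hl, AG_list_sum_range]

lemma AG_getD_mem (l : List ℕ) (i : ℕ) (hi : i < l.length) : l.getD i 0 ∈ l := by
  rw [List.getD_eq_getElem?_getD, List.getElem?_eq_getElem hi]
  exact List.getElem_mem hi

lemma AG_getD_take (l : List ℕ) (k i : ℕ) (hi : i < k) :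
    (l.take k).getD i 0 = l.getD i 0 := by
  rw [List.getD_eq_getElem?_getD, List.getD_eq_getElem?_getD, List.getElem?_take, if_pos hi]

lemma AG_take_mem (l : List ℕ) (k j : ℕ) (hjk : j < k) (hj : j < l.length) :
    l.getD j 0 ∈ l.take k := by
  have hlen : j < (l.take k).length := by
    rw [List.length_take]; omega
  have := AG_getD_mem (l.take k) j hlen
  rwa [AG_getD_take l k j hjk] at this

lemma AG_mem_take_index (l : List ℕ) (k n : ℕ) (h : n ∈ l.take k) :
    ∃ i, i < k ∧ i < l.length ∧ l.getD i 0 = n := by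
  rw [List.mem_take_iff_getElem] at h
  obtain ⟨i, hi, hn⟩ := h
  refine ⟨i, by omega, ?_, ?_⟩
  · have : (l.take k).length = min k l.length := List.length_take; simp at hi; omega
  · have hil : i < l.length := by simp at hi; omega
    rw [List.getD_eq_getElem?_getD, List.getElem?_eq_getElem hil]
    simpa using hn

lemma AG_mem_index (l : List ℕ) (n : ℕ) (h : n ∈ l) :
    ∃ i, i < l.length ∧ l.getD i 0 = n := by
  obtain ⟨i, hi, hn⟩ := List.mem_iff_getElem.mp h
  refine ⟨i, hi, ?_⟩
  rw [List.getD_eq_getElem?_getD, List.getElem?_eq_getElem hi]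
  simpa using hn

/-- enumerate a finite set with decreasing values of `a` -/
lemma AG_exists_sorted_list (a : ℕ → ℝ) (G : Finset ℕ) :
    ∃ l : List ℕ, l.Nodup ∧ l.toFinset = G ∧
      ∀ i j, i < j → j < l.length → a (l.getD j 0) ≤ a (l.getD i 0) := by
  classical
  induction G using Finset.strongInduction with
  | _ G ih =>
    rcases G.eq_empty_or_nonempty with rfl | hne
    · exact ⟨[], by simp, by simp, by simp⟩
    · obtain ⟨b, hbG, hbmax⟩ := Finset.exists_max_image G a hne
      obtain ⟨l', hnd', hto', hsort'⟩ := ih (G.erase b) (Finset.erase_ssubset hbG)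
      refine ⟨b :: l', ?_, ?_, ?_⟩
      · refine List.nodup_cons.mpr ⟨?_, hnd'⟩
        intro hb
        have : b ∈ G.erase b := hto' ▸ List.mem_toFinset.mpr hb
        exact (Finset.notMem_erase b G) this
      · rw [List.toFinset_cons, hto', Finset.insert_erase hbG]
      · intro i j hij hj
        rw [List.length_cons] at hj
        match i, j with
        | 0, (j+1) =>
          have hjlen : j < l'.length := by omega
          have hmem : l'.getD j 0 ∈ G.erase b := by
            rw [← hto']; exact List.mem_toFinset.mpr (AG_getD_mem l' j hjlen)
          simp only [List.getD_cons_zero, List.getD_cons_succ]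
          exact hbmax _ (Finset.mem_of_mem_erase hmem)
        | (i+1), (j+1) =>
          simp only [List.getD_cons_succ]
          exact hsort' i j (by omega) (by omega)

lemma AG_norm_I_le_one : ‖(RCLike.I : 𝕜)‖ ≤ 1 := by
  rcases (RCLike.I_mul_I_ax (K := 𝕜)) with h | h
  · rw [h]; simp
  · have h2 : ‖(RCLike.I : 𝕜)‖ * ‖(RCLike.I : 𝕜)‖ = 1 := by
      rw [← norm_mul, h]; simp
    nlinarith [norm_nonneg (RCLike.I : 𝕜)]

namespace BasisOf

variable (B : BasisOf 𝕜 X)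

/-- convexity: a bound valid for all `±1` sign patterns holds on `[-1,1]` coefficients -/
lemma conv_bound (w : ℕ → X) (M : ℝ) (A : Finset ℕ) :
    ∀ (v : X), (∀ η : ℕ → ℝ, (∀ n, η n = 1 ∨ η n = -1) →
      ‖v + ∑ n ∈ A, ((η n : ℝ) : 𝕜) • w n‖ ≤ M) →
    ∀ t : ℕ → ℝ, (∀ n, |t n| ≤ 1) → ‖v + ∑ n ∈ A, ((t n : ℝ) : 𝕜) • w n‖ ≤ M := by
  classical
  induction A using Finset.induction_on with
  | empty =>
    intro v h t _
    simpa using h (fun _ => 1) (fun _ => Or.inl rfl)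
  | @insert a s ha ih =>
    intro v h t ht
    have hside : ∀ σ : ℝ, σ = 1 ∨ σ = -1 →
        ∀ η : ℕ → ℝ, (∀ n, η n = 1 ∨ η n = -1) →
        ‖(v + ((σ : ℝ) : 𝕜) • w a) + ∑ n ∈ s, ((η n : ℝ) : 𝕜) • w n‖ ≤ M := by
      intro σ hσ η hη
      have hval : ∀ n, Function.update η a σ n = 1 ∨ Function.update η a σ n = -1 := by
        intro n
        rcases eq_or_ne n a with rfl | hna
        · rw [Function.update_self]; exact hσ
        · rw [Function.update_of_ne hna]; exact hη n
      have := h (Function.update η a σ) hval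
      rw [Finset.sum_insert ha, Function.update_self] at this
      have heq : ∑ n ∈ s, ((Function.update η a σ n : ℝ) : 𝕜) • w n
          = ∑ n ∈ s, ((η n : ℝ) : 𝕜) • w n :=
        Finset.sum_congr rfl fun n hn => by
          rw [Function.update_of_ne (ne_of_mem_of_not_mem hn ha)]
      rw [heq, ← add_assoc] at this
      exact this
    have h₁ := ih (v + ((1 : ℝ) : 𝕜) • w a) (hside 1 (Or.inl rfl)) t ht
    have h₂ := ih (v + ((-1 : ℝ) : 𝕜) • w a) (hside (-1) (Or.inr rfl)) t ht
    have hta := abs_le.mp (ht a)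
    have hθ0 : 0 ≤ (1 + t a) / 2 := by linarith [hta.1]
    have hθ1 : 0 ≤ 1 - (1 + t a) / 2 := by linarith [hta.2]
    have key : v + ∑ n ∈ insert a s, ((t n : ℝ) : 𝕜) • w n
        = (((1 + t a) / 2 : ℝ) : 𝕜) • ((v + ((1 : ℝ) : 𝕜) • w a) + ∑ n ∈ s, ((t n : ℝ) : 𝕜) • w n)
          + (((1 - (1 + t a) / 2 : ℝ)) : 𝕜) • ((v + ((-1 : ℝ) : 𝕜) • w a) + ∑ n ∈ s, ((t n : ℝ) : 𝕜) • w n) := by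
      rw [Finset.sum_insert ha, ← add_assoc]
      match_scalars <;> (push_cast; ring)
    rw [key]
    calc ‖_ + _‖ ≤ ‖(((1 + t a) / 2 : ℝ) : 𝕜) • ((v + ((1 : ℝ) : 𝕜) • w a) + ∑ n ∈ s, ((t n : ℝ) : 𝕜) • w n)‖
          + ‖(((1 - (1 + t a) / 2 : ℝ)) : 𝕜) • ((v + ((-1 : ℝ) : 𝕜) • w a) + ∑ n ∈ s, ((t n : ℝ) : 𝕜) • w n)‖ :=
        norm_add_le _ _
    _ = (1 + t a) / 2 * ‖(v + ((1 : ℝ) : 𝕜) • w a) + ∑ n ∈ s, ((t n : ℝ) : 𝕜) • w n‖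
          + (1 - (1 + t a) / 2) * ‖(v + ((-1 : ℝ) : 𝕜) • w a) + ∑ n ∈ s, ((t n : ℝ) : 𝕜) • w n‖ := by
        rw [norm_smul, norm_smul, RCLike.norm_ofReal, RCLike.norm_ofReal,
          abs_of_nonneg hθ0, abs_of_nonneg hθ1]
    _ ≤ (1 + t a) / 2 * M + (1 - (1 + t a) / 2) * M :=
        add_le_add (mul_le_mul_of_nonneg_left h₁ hθ0) (mul_le_mul_of_nonneg_left h₂ hθ1)
    _ = M := by ring

/-- greedy projections of sign vectors -/
lemma qg_proj_sgnSum {C : ℝ} (hC : B.QuasiGreedyWith C) (hC1 : 1 ≤ C)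
    {ε : ℕ → 𝕜} (hε : ∀ n, ‖ε n‖ = 1) {S T : Finset ℕ} (h : S ⊆ T) :
    ‖B.sgnSum ε S‖ ≤ C * ‖B.sgnSum ε T‖ := by
  rcases S.eq_empty_or_nonempty with rfl | hne
  · have : (0:ℝ) ≤ C * ‖B.sgnSum ε T‖ := by
      have : (0:ℝ) ≤ C := by linarith
      positivity
    simpa [BasisOf.sgnSum] using this
  · have h2 := hC (B.sgnSum ε T) S hne (B.isGreedySet_sgnSum hε h)
    rwa [B.proj_sgnSum h] at h2

/-- real ±1 multipliers of sign vectors -/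
lemma pm_real {C : ℝ} (hC : B.QuasiGreedyWith C) (hC1 : 1 ≤ C)
    {ε : ℕ → 𝕜} (hε : ∀ n, ‖ε n‖ = 1) (T : Finset ℕ)
    (η : ℕ → ℝ) (hη : ∀ n, η n = 1 ∨ η n = -1) :
    ‖∑ n ∈ T, ((η n : ℝ) : 𝕜) • (ε n • B.e n)‖ ≤ (2*C+1) * ‖B.sgnSum ε T‖ := by
  classical
  set Tp := T.filter (fun n => η n = 1) with hTp
  have key : ∑ n ∈ T, ((η n : ℝ) : 𝕜) • (ε n • B.e n)
      = (2:𝕜) • B.sgnSum ε Tp - B.sgnSum ε T := by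
    rw [eq_sub_iff_add_eq]
    unfold BasisOf.sgnSum
    rw [Finset.smul_sum, ← Finset.sum_add_distrib]
    have hterm : ∀ n ∈ T, ((η n : ℝ) : 𝕜) • (ε n • B.e n) + ε n • B.e n
        = if η n = 1 then (2:𝕜) • (ε n • B.e n) else 0 := by
      intro n _
      rcases hη n with h1 | h1 <;> rw [h1]
      · rw [if_pos rfl, two_smul]; push_cast; rw [one_smul]
      · rw [if_neg (by norm_num)]; push_cast; rw [neg_smul, one_smul, neg_add_cancel]
    rw [Finset.sum_congr rfl hterm, ← Finset.sum_filter]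
  rw [key]
  have h1 : ‖B.sgnSum ε Tp‖ ≤ C * ‖B.sgnSum ε T‖ :=
    B.qg_proj_sgnSum hC hC1 hε (Finset.filter_subset _ _)
  calc ‖(2:𝕜) • B.sgnSum ε Tp - B.sgnSum ε T‖
      ≤ ‖(2:𝕜) • B.sgnSum ε Tp‖ + ‖B.sgnSum ε T‖ := norm_sub_le _ _
  _ = 2 * ‖B.sgnSum ε Tp‖ + ‖B.sgnSum ε T‖ := by
      rw [norm_smul]; norm_num
  _ ≤ 2 * (C * ‖B.sgnSum ε T‖) + ‖B.sgnSum ε T‖ := by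
      have := norm_nonneg (B.sgnSum ε T); nlinarith
  _ = (2*C+1) * ‖B.sgnSum ε T‖ := by ring

/-- quasi-greedy bases are unconditional for constant coefficients -/
lemma sign_change {C : ℝ} (hC : B.QuasiGreedyWith C) (hC1 : 1 ≤ C)
    {ε δ' : ℕ → 𝕜} (hε : ∀ n, ‖ε n‖ = 1) (hδ : ∀ n, ‖δ' n‖ = 1) (A : Finset ℕ) :
    ‖B.sgnSum δ' A‖ ≤ (2*(2*C+1)) * ‖B.sgnSum ε A‖ := by
  classical
  set μ : ℕ → 𝕜 := fun n => δ' n * (ε n)⁻¹ with hμdef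
  have hε0 : ∀ n, ε n ≠ 0 := fun n h => by
    have := hε n; rw [h, norm_zero] at this; norm_num at this
  have hμ : ∀ n, ‖μ n‖ = 1 := fun n => by
    rw [hμdef]; simp only [norm_mul, norm_inv, hε n, hδ n, inv_one, mul_one]
  have key : B.sgnSum δ' A = (∑ n ∈ A, ((RCLike.re (μ n) : ℝ) : 𝕜) • (ε n • B.e n))
      + (RCLike.I : 𝕜) • (∑ n ∈ A, ((RCLike.im (μ n) : ℝ) : 𝕜) • (ε n • B.e n)) := by
    unfold BasisOf.sgnSum
    rw [Finset.smul_sum, ← Finset.sum_add_distrib]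
    refine Finset.sum_congr rfl fun n _ => ?_
    rw [smul_smul, smul_smul, smul_smul, ← add_smul]
    congr 1
    have h1 : (RCLike.re (μ n) : 𝕜) + (RCLike.im (μ n) : 𝕜) * RCLike.I = μ n :=
      RCLike.re_add_im (μ n)
    have h2 : δ' n = μ n * ε n := by
      rw [hμdef]
      exact (inv_mul_cancel_right₀ (hε0 n) (δ' n)).symm
    linear_combination h2 - ε n * h1
  have M0 : ∀ η : ℕ → ℝ, (∀ n, η n = 1 ∨ η n = -1) →
      ‖(0:X) + ∑ n ∈ A, ((η n : ℝ) : 𝕜) • (ε n • B.e n)‖ ≤ (2*C+1) * ‖B.sgnSum ε A‖ := by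
    intro η hη
    rw [zero_add]
    exact B.pm_real hC hC1 hε A η hη
  have hre : ‖∑ n ∈ A, ((RCLike.re (μ n) : ℝ) : 𝕜) • (ε n • B.e n)‖
      ≤ (2*C+1) * ‖B.sgnSum ε A‖ := by
    have := conv_bound (fun n => ε n • B.e n) ((2*C+1) * ‖B.sgnSum ε A‖) A 0 M0
      (fun n => RCLike.re (μ n))
      (fun n => le_trans (RCLike.abs_re_le_norm (μ n)) (le_of_eq (hμ n)))
    rwa [zero_add] at this
  have him : ‖∑ n ∈ A, ((RCLike.im (μ n) : ℝ) : 𝕜) • (ε n • B.e n)‖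
      ≤ (2*C+1) * ‖B.sgnSum ε A‖ := by
    have := conv_bound (fun n => ε n • B.e n) ((2*C+1) * ‖B.sgnSum ε A‖) A 0 M0
      (fun n => RCLike.im (μ n))
      (fun n => le_trans (RCLike.abs_im_le_norm (μ n)) (le_of_eq (hμ n)))
    rwa [zero_add] at this
  have hM0 : (0:ℝ) ≤ (2*C+1) * ‖B.sgnSum ε A‖ := by
    have h := norm_nonneg (B.sgnSum ε A); nlinarith
  calc ‖B.sgnSum δ' A‖
      ≤ ‖∑ n ∈ A, ((RCLike.re (μ n) : ℝ) : 𝕜) • (ε n • B.e n)‖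
        + ‖(RCLike.I : 𝕜) • (∑ n ∈ A, ((RCLike.im (μ n) : ℝ) : 𝕜) • (ε n • B.e n))‖ := by
        rw [key]; exact norm_add_le _ _
  _ ≤ (2*C+1) * ‖B.sgnSum ε A‖ + 1 * ((2*C+1) * ‖B.sgnSum ε A‖) := by
      refine add_le_add hre ?_
      rw [norm_smul]
      exact mul_le_mul AG_norm_I_le_one him (norm_nonneg _) one_pos.le
  _ = (2*(2*C+1)) * ‖B.sgnSum ε A‖ := by ring

/-- bound for sums with small coefficients -/
lemma coef_bound {C : ℝ} (hC : B.QuasiGreedyWith C) (hC1 : 1 ≤ C) (F : Finset ℕ)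
    (b : ℕ → 𝕜) (α : ℝ) (hα : 0 ≤ α) (hb : ∀ n ∈ F, ‖b n‖ ≤ α) :
    ‖∑ n ∈ F, b n • B.e n‖ ≤ 2*(2*C+1) * α * ‖B.ones F‖ := by
  classical
  rcases eq_or_lt_of_le hα with hα0 | hαpos
  · have hz : ∀ n ∈ F, b n • B.e n = 0 := fun n hn => by
      have := hb n hn
      rw [← hα0] at this
      rw [norm_le_zero_iff.mp this, zero_smul]
    rw [Finset.sum_congr rfl hz, Finset.sum_const, smul_zero, norm_zero, ← hα0]
    simp
  set t : ℕ → ℝ := fun n => if n ∈ F then RCLike.re (b n) / α else 0 with htdef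
  set s : ℕ → ℝ := fun n => if n ∈ F then RCLike.im (b n) / α else 0 with hsdef
  have ht : ∀ n, |t n| ≤ 1 := by
    intro n
    rw [htdef]
    by_cases hn : n ∈ F
    · simp only [if_pos hn, abs_div, abs_of_pos hαpos]
      rw [div_le_one hαpos]
      exact le_trans (RCLike.abs_re_le_norm (b n)) (hb n hn)
    · simp [hn]
  have hs : ∀ n, |s n| ≤ 1 := by
    intro n
    rw [hsdef]
    by_cases hn : n ∈ F
    · simp only [if_pos hn, abs_div, abs_of_pos hαpos]
      rw [div_le_one hαpos]
      exact le_trans (RCLike.abs_im_le_norm (b n)) (hb n hn)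
    · simp [hn]
  have key : ∑ n ∈ F, b n • B.e n
      = (α : 𝕜) • (∑ n ∈ F, ((t n : ℝ) : 𝕜) • B.e n)
        + (α : 𝕜) • ((RCLike.I : 𝕜) • ∑ n ∈ F, ((s n : ℝ) : 𝕜) • B.e n) := by
    rw [Finset.smul_sum, Finset.smul_sum, Finset.smul_sum, ← Finset.sum_add_distrib]
    refine Finset.sum_congr rfl fun n hn => ?_
    rw [htdef, hsdef]
    simp only [if_pos hn]
    rw [smul_smul, smul_smul, smul_smul, ← add_smul]
    congr 1
    have h1 : (RCLike.re (b n) : 𝕜) + (RCLike.im (b n) : 𝕜) * RCLike.I = b n :=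
      RCLike.re_add_im (b n)
    have hαne : (α : 𝕜) ≠ 0 := by
      simp only [ne_eq, RCLike.ofReal_eq_zero]
      exact ne_of_gt hαpos
    have hαne2 : (α:𝕜) ≠ 0 := hαne
    push_cast
    field_simp
    linear_combination (-1:𝕜) * h1
  have M0 : ∀ η : ℕ → ℝ, (∀ n, η n = 1 ∨ η n = -1) →
      ‖(0:X) + ∑ n ∈ F, ((η n : ℝ) : 𝕜) • B.e n‖ ≤ (2*C+1) * ‖B.ones F‖ := by
    intro η hη
    rw [zero_add]
    have := B.pm_real hC hC1 (ε := fun _ => (1:𝕜)) (fun _ => norm_one) F η hη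
    rw [← B.ones_eq_sgnSum] at this
    simpa [one_smul] using this
  have hre : ‖∑ n ∈ F, ((t n : ℝ) : 𝕜) • B.e n‖ ≤ (2*C+1) * ‖B.ones F‖ := by
    have := conv_bound (fun n => B.e n) ((2*C+1) * ‖B.ones F‖) F 0 M0 t ht
    rwa [zero_add] at this
  have him : ‖∑ n ∈ F, ((s n : ℝ) : 𝕜) • B.e n‖ ≤ (2*C+1) * ‖B.ones F‖ := by
    have := conv_bound (fun n => B.e n) ((2*C+1) * ‖B.ones F‖) F 0 M0 s hs
    rwa [zero_add] at this
  rw [key]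
  calc ‖(α : 𝕜) • (∑ n ∈ F, ((t n : ℝ) : 𝕜) • B.e n)
        + (α : 𝕜) • ((RCLike.I : 𝕜) • ∑ n ∈ F, ((s n : ℝ) : 𝕜) • B.e n)‖
      ≤ ‖(α : 𝕜) • (∑ n ∈ F, ((t n : ℝ) : 𝕜) • B.e n)‖
        + ‖(α : 𝕜) • ((RCLike.I : 𝕜) • ∑ n ∈ F, ((s n : ℝ) : 𝕜) • B.e n)‖ := norm_add_le _ _
  _ ≤ α * ((2*C+1) * ‖B.ones F‖) + α * (1 * ((2*C+1) * ‖B.ones F‖)) := by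
      refine add_le_add ?_ ?_
      · rw [norm_smul, RCLike.norm_ofReal, abs_of_pos hαpos]
        exact mul_le_mul_of_nonneg_left hre hα
      · rw [norm_smul, RCLike.norm_ofReal, abs_of_pos hαpos, norm_smul]
        refine mul_le_mul_of_nonneg_left ?_ hα
        exact mul_le_mul AG_norm_I_le_one him (norm_nonneg _) one_pos.le
  _ = 2*(2*C+1) * α * ‖B.ones F‖ := by ring

/-- suppression quasi-greedy bound (allows the empty set) -/
lemma supp_qg {C : ℝ} (hC : B.QuasiGreedyWith C) (hC1 : 1 ≤ C)
    (y : X) (G : Finset ℕ) (hG : B.IsGreedySet y G) :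
    ‖y - B.proj G y‖ ≤ (1+C) * ‖y‖ := by
  rcases G.eq_empty_or_nonempty with rfl | hne
  · have h0 : B.proj (∅ : Finset ℕ) y = 0 := Finset.sum_empty
    rw [h0, sub_zero]
    nlinarith [norm_nonneg y]
  · calc ‖y - B.proj G y‖ ≤ ‖y‖ + ‖B.proj G y‖ := norm_sub_le _ _
    _ ≤ ‖y‖ + C * ‖y‖ := by linarith [hC y G hne hG]
    _ = (1+C) * ‖y‖ := by ring

/-- the truncation estimate, signed version -/
lemma trunc_signed {C : ℝ} (hC : B.QuasiGreedyWith C) (hC1 : 1 ≤ C)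
    (y : X) (G : Finset ℕ) (hG : B.IsGreedySet y G) (α : ℝ) (hα0 : 0 ≤ α)
    (hα : ∀ n ∈ G, α ≤ ‖B.coord n y‖) :
    α * ‖B.sgnSum (fun n => if B.coord n y = 0 then 1
      else (‖B.coord n y‖ : 𝕜)⁻¹ * B.coord n y) G‖ ≤ 2 * C * ‖y‖ := by
  classical
  set ε : ℕ → 𝕜 := fun n => if B.coord n y = 0 then 1
    else (‖B.coord n y‖ : 𝕜)⁻¹ * B.coord n y with hεdef
  have hCy : (0:ℝ) ≤ C * ‖y‖ := by nlinarith [norm_nonneg y]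
  rcases eq_or_lt_of_le hα0 with hz | hαpos
  · rw [← hz, zero_mul]; nlinarith
  have hne0 : ∀ n ∈ G, B.coord n y ≠ 0 := fun n hn h => by
    have h2 := hα n hn; rw [h, norm_zero] at h2; linarith
  obtain ⟨l, hnodup, hto, hsorted⟩ := AG_exists_sorted_list (fun n => ‖B.coord n y‖) G
  set r := l.length with hr
  have hmem : ∀ i, i < r → l.getD i 0 ∈ G := fun i hi => by
    rw [← hto]; exact List.mem_toFinset.mpr (AG_getD_mem l i hi)
  set g : ℕ → X := fun i => B.coord (l.getD i 0) y • B.e (l.getD i 0) with hg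
  set c : ℕ → ℝ := fun i => α / ‖B.coord (l.getD i 0) y‖ with hcdef
  set f : ℕ → 𝕜 := fun i => ((c i : ℝ) : 𝕜) with hf
  have hcpos : ∀ i, i < r → 0 < ‖B.coord (l.getD i 0) y‖ :=
    fun i hi => lt_of_lt_of_le hαpos (hα _ (hmem i hi))
  have hc0 : ∀ i, i < r → 0 ≤ c i := fun i hi => div_nonneg hα0 (hcpos i hi).le
  have hc1 : ∀ i, i < r → c i ≤ 1 :=
    fun i hi => (div_le_one (hcpos i hi)).mpr (hα _ (hmem i hi))
  have hcmono : ∀ i j, i ≤ j → j < r → c i ≤ c j := by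
    intro i j hij hj
    rcases eq_or_lt_of_le hij with rfl | h
    · exact le_refl _
    · exact div_le_div_of_nonneg_left hα0 (hcpos j hj) (hsorted i j h hj)
  -- partial sums are norms of greedy projections
  have hS : ∀ k, k ≤ r → ‖∑ i ∈ Finset.range k, g i‖ ≤ C * ‖y‖ := by
    intro k hk
    rcases Nat.eq_zero_or_pos k with rfl | hkpos
    · simpa using hCy
    have htake_nodup : (l.take k).Nodup := (List.take_sublist k l).nodup hnodup
    have hsum : ∑ i ∈ Finset.range k, g i = B.proj (l.take k).toFinset y := by
      unfold BasisOf.proj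
      rw [AG_sum_toFinset_range _ htake_nodup, List.length_take, min_eq_left hk]
      exact Finset.sum_congr rfl fun i hi => by
        rw [AG_getD_take l k i (Finset.mem_range.mp hi)]
    have hgr : B.IsGreedySet y (l.take k).toFinset := by
      intro a ha b hb
      obtain ⟨i, hik, hir, hia⟩ := AG_mem_take_index l k a (List.mem_toFinset.mp ha)
      by_cases hbG : b ∈ G
      · rw [← hto] at hbG
        obtain ⟨j, hj, hjb⟩ := AG_mem_index l b (List.mem_toFinset.mp hbG)
        have hjk : ¬ (j < k) := fun hjk =>
          hb (by rw [← hjb]; exact List.mem_toFinset.mpr (AG_take_mem l k j hjk hj))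
        rw [← hia, ← hjb]
        exact hsorted i j (by omega) hj
      · exact hG a (by rw [← hia]; exact hmem i hir) b hbG
    have hnonempty : (l.take k).toFinset.Nonempty :=
      ⟨l.getD 0 0, List.mem_toFinset.mpr (AG_take_mem l k 0 hkpos (by omega))⟩
    rw [hsum]
    exact hC y _ hnonempty hgr
  -- the main identity
  have hmain : (α : 𝕜) • B.sgnSum ε G = ∑ i ∈ Finset.range r, f i • g i := by
    unfold BasisOf.sgnSum
    rw [Finset.smul_sum, ← hto, AG_sum_toFinset_range _ hnodup]
    refine Finset.sum_congr rfl fun i hi => ?_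
    have hi' := Finset.mem_range.mp hi
    have hn0 : B.coord (l.getD i 0) y ≠ 0 := hne0 _ (hmem i hi')
    rw [hεdef]
    simp only [if_neg hn0]
    rw [hf, hg, hcdef, smul_smul, smul_smul]
    congr 1
    have hnorm0 : (‖B.coord (l.getD i 0) y‖ : 𝕜) ≠ 0 := by
      simp only [ne_eq, RCLike.ofReal_eq_zero, norm_eq_zero]
      exact hn0
    push_cast
    field_simp
  rcases Nat.eq_zero_or_pos r with hr0 | hrpos
  · have hG0 : G = ∅ := by
      rw [← hto, List.length_eq_zero_iff.mp hr0]; rfl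
    rw [hG0]
    have : B.sgnSum ε (∅ : Finset ℕ) = 0 := Finset.sum_empty
    rw [this, norm_zero, mul_zero]
    nlinarith
  have hLHS : α * ‖B.sgnSum ε G‖ = ‖(α : 𝕜) • B.sgnSum ε G‖ := by
    rw [norm_smul, RCLike.norm_ofReal, abs_of_nonneg hα0]
  rw [hLHS, hmain, Finset.sum_range_by_parts f g r]
  have h1 : ‖f (r-1) • ∑ i ∈ Finset.range r, g i‖ ≤ 1 * (C * ‖y‖) := by
    rw [norm_smul, hf, RCLike.norm_ofReal, abs_of_nonneg (hc0 (r-1) (by omega))]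
    exact mul_le_mul (hc1 (r-1) (by omega)) (hS r le_rfl) (norm_nonneg _) zero_le_one
  have h2 : ‖∑ i ∈ Finset.range (r-1), (f (i+1) - f i) • ∑ j ∈ Finset.range (i+1), g j‖
      ≤ (c (r-1) - c 0) * (C * ‖y‖) := by
    calc ‖∑ i ∈ Finset.range (r-1), (f (i+1) - f i) • ∑ j ∈ Finset.range (i+1), g j‖
        ≤ ∑ i ∈ Finset.range (r-1), ‖(f (i+1) - f i) • ∑ j ∈ Finset.range (i+1), g j‖ :=
        norm_sum_le _ _
    _ ≤ ∑ i ∈ Finset.range (r-1), (c (i+1) - c i) * (C * ‖y‖) := by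
        refine Finset.sum_le_sum fun i hi => ?_
        have hilt := Finset.mem_range.mp hi
        rw [norm_smul, hf]
        have hcast : ((c (i+1) : ℝ) : 𝕜) - ((c i : ℝ) : 𝕜) = ((c (i+1) - c i : ℝ) : 𝕜) := by
          push_cast; ring
        rw [hcast, RCLike.norm_ofReal,
          abs_of_nonneg (sub_nonneg.mpr (hcmono i (i+1) (by omega) (by omega)))]
        refine mul_le_mul_of_nonneg_left (hS (i+1) (by omega)) ?_
        exact sub_nonneg.mpr (hcmono i (i+1) (by omega) (by omega))
    _ = (∑ i ∈ Finset.range (r-1), (c (i+1) - c i)) * (C * ‖y‖) := by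
        rw [Finset.sum_mul]
    _ = (c (r-1) - c 0) * (C * ‖y‖) := by
        rw [Finset.sum_range_sub c (r-1)]
  calc ‖f (r-1) • ∑ i ∈ Finset.range r, g i
        - ∑ i ∈ Finset.range (r-1), (f (i+1) - f i) • ∑ j ∈ Finset.range (i+1), g j‖
      ≤ ‖f (r-1) • ∑ i ∈ Finset.range r, g i‖
        + ‖∑ i ∈ Finset.range (r-1), (f (i+1) - f i) • ∑ j ∈ Finset.range (i+1), g j‖ :=
      norm_sub_le _ _
  _ ≤ 1 * (C * ‖y‖) + (c (r-1) - c 0) * (C * ‖y‖) := add_le_add h1 h2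
  _ ≤ 2 * C * ‖y‖ := by
      have hcr1 := hc1 (r-1) (by omega)
      have hcr0 := hc0 0 (by omega)
      have hcr00 := hc0 (r-1) (by omega)
      nlinarith

/-- the truncation estimate -/
lemma trunc {C : ℝ} (hC : B.QuasiGreedyWith C) (hC1 : 1 ≤ C)
    (y : X) (G : Finset ℕ) (hG : B.IsGreedySet y G) (α : ℝ) (hα0 : 0 ≤ α)
    (hα : ∀ n ∈ G, α ≤ ‖B.coord n y‖) :
    α * ‖B.ones G‖ ≤ 2*(2*C+1) * (2*C) * ‖y‖ := by
  classical
  set ε : ℕ → 𝕜 := fun n => if B.coord n y = 0 then 1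
    else (‖B.coord n y‖ : 𝕜)⁻¹ * B.coord n y with hεdef
  have hεuni : ∀ n, ‖ε n‖ = 1 := by
    intro n
    rw [hεdef]
    by_cases h : B.coord n y = 0
    · simp [h]
    · have hpos : (0:ℝ) < ‖B.coord n y‖ := norm_pos_iff.mpr h
      simp only [if_neg h, norm_mul, norm_inv, RCLike.norm_ofReal, abs_norm]
      field_simp
  have h1 : ‖B.ones G‖ ≤ (2*(2*C+1)) * ‖B.sgnSum ε G‖ := by
    rw [B.ones_eq_sgnSum]
    exact B.sign_change hC hC1 hεuni (fun _ => norm_one) G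
  have h2 := B.trunc_signed hC hC1 y G hG α hα0 hα
  rw [← hεdef] at h2
  have h2C : (0:ℝ) ≤ 2*(2*C+1) := by linarith
  calc α * ‖B.ones G‖ ≤ α * ((2*(2*C+1)) * ‖B.sgnSum ε G‖) :=
      mul_le_mul_of_nonneg_left h1 hα0
  _ = (2*(2*C+1)) * (α * ‖B.sgnSum ε G‖) := by ring
  _ ≤ (2*(2*C+1)) * (2*C*‖y‖) := mul_le_mul_of_nonneg_left h2 h2C
  _ = 2*(2*C+1) * (2*C) * ‖y‖ := by ring

/-- quasi-greedy plus democratic implies almost greedy -/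
lemma ag_of_qg_dem {seq : ℕ → ℕ} {C Δ : ℝ} (hC : B.QuasiGreedyWith C) (hC1 : 1 ≤ C)
    (hΔ : B.DemocraticWith seq Δ) (hΔ0 : 0 ≤ Δ) : B.AlmostGreedy seq := by
  classical
  have hC0 : (0:ℝ) ≤ C := by linarith
  have h2C' : (0:ℝ) ≤ 2*(2*C+1) := by linarith
  have hbig : (0:ℝ) ≤ 2*(2*C+1) * Δ * (2*(2*C+1) * (2*C)) :=
    mul_nonneg (mul_nonneg h2C' hΔ0) (mul_nonneg h2C' (by linarith))
  refine ⟨(1+C) + 2*(2*C+1) * Δ * (2*(2*C+1) * (2*C)), by linarith, ?_⟩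
  intro x m hm A hAcard hA D hDsub hDcard
  set y := x - B.proj D x with hy
  have hAne : A.Nonempty := Finset.card_pos.mp (by omega)
  have hycoord : ∀ n, B.coord n y = if n ∈ D then 0 else B.coord n x := by
    intro n
    rw [hy, map_sub, B.coord_proj]
    by_cases h : n ∈ D <;> simp [h]
  have hADgr : B.IsGreedySet y (A \ D) := by
    intro a ha b hb
    obtain ⟨haA, haD⟩ := Finset.mem_sdiff.mp ha
    rw [hycoord, hycoord, if_neg haD]
    by_cases hbD : b ∈ D
    · rw [if_pos hbD, norm_zero]; exact norm_nonneg _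
    · rw [if_neg hbD]
      have hbA : b ∉ A := fun hbA => hb (Finset.mem_sdiff.mpr ⟨hbA, hbD⟩)
      exact hA a haA b hbA
  have h4 : B.proj A x + B.proj (D \ A) x = B.proj D x + B.proj (A \ D) x := by
    have h2 : B.proj (A ∪ D) x = B.proj A x + B.proj (D \ A) x := by
      rw [← B.proj_union_disjoint Finset.disjoint_sdiff x, Finset.union_sdiff_self_eq_union]
    have h3 : B.proj (A ∪ D) x = B.proj D x + B.proj (A \ D) x := by
      rw [← B.proj_union_disjoint Finset.disjoint_sdiff x,
        Finset.union_sdiff_self_eq_union, Finset.union_comm]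
    exact h2.symm.trans h3
  have hid : x - B.proj A x = (y - B.proj (A \ D) y) + B.proj (D \ A) x := by
    have h1 : B.proj (A \ D) y = B.proj (A \ D) x := by
      refine B.proj_congr fun n hn => ?_
      rw [hycoord, if_neg (Finset.mem_sdiff.mp hn).2]
    rw [hy, h1]
    have h5 : x - B.proj A x - (x - B.proj D x - B.proj (A \ D) x + B.proj (D \ A) x)
        = B.proj D x + B.proj (A \ D) x - (B.proj A x + B.proj (D \ A) x) := by abel
    rw [← h4] at h5
    have h6 : x - B.proj A x - (x - B.proj D x - B.proj (A \ D) x + B.proj (D \ A) x) = 0 := by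
      rw [h5]; abel
    exact sub_eq_zero.mp h6
  set α := A.inf' hAne (fun n => ‖B.coord n x‖) with hαdef
  have hα0 : 0 ≤ α := Finset.le_inf' hAne _ fun a _ => norm_nonneg _
  have hDA : ∀ n ∈ D \ A, ‖B.coord n x‖ ≤ α := by
    intro n hn
    obtain ⟨_, hnA⟩ := Finset.mem_sdiff.mp hn
    exact Finset.le_inf' hAne _ fun a ha => hA a ha n hnA
  have hAD : ∀ n ∈ A \ D, α ≤ ‖B.coord n y‖ := by
    intro n hn
    rw [hycoord, if_neg (Finset.mem_sdiff.mp hn).2]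
    exact Finset.inf'_le _ (Finset.mem_sdiff.mp hn).1
  have b1 : ‖y - B.proj (A \ D) y‖ ≤ (1+C) * ‖y‖ := B.supp_qg hC hC1 y _ hADgr
  have b2 : ‖B.proj (D \ A) x‖ ≤ 2*(2*C+1) * α * ‖B.ones (D \ A)‖ :=
    B.coef_bound hC hC1 (D \ A) _ α hα0 hDA
  have b3 : ‖B.ones (D \ A)‖ ≤ Δ * ‖B.ones (A \ D)‖ := by
    refine hΔ _ _ ⟨?_, ?_⟩
    · exact le_trans (Finset.coe_subset.mpr Finset.sdiff_subset) hDsub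
    · exact le_of_eq (Finset.card_sdiff_comm (hDcard.trans hAcard.symm))
  have b4 : α * ‖B.ones (A \ D)‖ ≤ 2*(2*C+1) * (2*C) * ‖y‖ :=
    B.trunc hC hC1 y (A \ D) hADgr α hα0 hAD
  have h2C : (0:ℝ) ≤ 2*(2*C+1) := by linarith
  have h2CΔ : (0:ℝ) ≤ 2*(2*C+1)*Δ := by positivity
  calc ‖x - B.proj A x‖ = ‖(y - B.proj (A \ D) y) + B.proj (D \ A) x‖ := by rw [hid]
  _ ≤ ‖y - B.proj (A \ D) y‖ + ‖B.proj (D \ A) x‖ := norm_add_le _ _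
  _ ≤ (1+C)*‖y‖ + 2*(2*C+1) * α * ‖B.ones (D \ A)‖ := add_le_add b1 b2
  _ ≤ (1+C)*‖y‖ + 2*(2*C+1) * Δ * (α * ‖B.ones (A \ D)‖) := by
      have hb3 : α * ‖B.ones (D \ A)‖ ≤ α * (Δ * ‖B.ones (A \ D)‖) :=
        mul_le_mul_of_nonneg_left b3 hα0
      nlinarith [mul_le_mul_of_nonneg_left hb3 h2C]
  _ ≤ (1+C)*‖y‖ + 2*(2*C+1) * Δ * (2*(2*C+1) * (2*C) * ‖y‖) := by
      nlinarith [mul_le_mul_of_nonneg_left b4 h2CΔ]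
  _ = ((1+C) + 2*(2*C+1) * Δ * (2*(2*C+1) * (2*C))) * ‖y‖ := by ring
  _ = _ := by rw [hy]

end BasisOf

end AGAux

/-- A basis is (𝐧, almost greedy) iff it is quasi-greedy and
(𝐧, democratic). -/
theorem statement12 {𝕜 X : Type*} [RCLike 𝕜] [NormedAddCommGroup X] [NormedSpace 𝕜 X]
    [CompleteSpace X] (B : BasisOf 𝕜 X) (seq : ℕ → ℕ) (hseq : StrictMono seq) :
    B.AlmostGreedy seq ↔ B.QuasiGreedy ∧ B.Democratic seq := by
  constructor
  · rintro ⟨C, hC1, hAG⟩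
    exact ⟨⟨1 + C, B.qg_of_ag hseq hC1 hAG⟩, ⟨C * C, B.dem_of_ag hseq hC1 hAG⟩⟩
  · rintro ⟨⟨C₀, hqg₀⟩, ⟨Δ₀, hdem₀⟩⟩
    have hqg : B.QuasiGreedyWith (max C₀ 1) := fun x A hne hA =>
      le_trans (hqg₀ x A hne hA)
        (mul_le_mul_of_nonneg_right (le_max_left _ _) (norm_nonneg _))
    have hdem : B.DemocraticWith seq (max Δ₀ 0) := fun A D hS =>
      le_trans (hdem₀ A D hS)
        (mul_le_mul_of_nonneg_right (le_max_left _ _) (norm_nonneg _))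
    exact B.ag_of_qg_dem hqg (le_max_right _ _) hdem (le_max_right _ _)
end

section
/- Let 𝓑 be a basis of a Banach space X and 𝐧 a strictly increasing sequence of positive integers. The following statements are equivalent: (i) 𝓑 is (𝐧, almost greedy); (ii) there is a constant C ≥ 1 such that ‖x − G_m(x)‖ ≤ C·min_{0≤k≤m} σ̌^𝐧_k(x) for all x ∈ X, all m ≥ 1 and all greedy sums G_m(x); (iii) 𝓑 is (𝐧, consecutive almost greedy) of type I, i.e., there is C ≥ 1 with ‖x − G_m(x)‖ ≤ C·σ̌^𝐧_m(x) for all x, m and greedy sums. -/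
open scoped BigOperators ENNReal NNReal

section Aux

open Finset

variable {𝕜 : Type*} {X : Type*} [RCLike 𝕜] [NormedAddCommGroup X] [NormedSpace 𝕜 X]
variable (B : BasisOf 𝕜 X)

lemma coord_sum_smul (n : ℕ) (T : Finset ℕ) (a : ℕ → 𝕜) :
    B.coord n (∑ i ∈ T, a i • B.e i) = if n ∈ T then a n else 0 := by
  rw [map_sum]
  have : ∀ i ∈ T, B.coord n (a i • B.e i) = if i = n then a i else 0 := by
    intro i _
    rw [map_smul, B.biorth n i, smul_eq_mul]
    by_cases h : i = n
    · simp [h]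
    · simp [h, Ne.symm h]
  rw [Finset.sum_congr rfl this, Finset.sum_ite_eq' T n a]

lemma coord_proj (A : Finset ℕ) (x : X) (n : ℕ) :
    B.coord n (B.proj A x) = if n ∈ A then B.coord n x else 0 := by
  rw [BasisOf.proj, coord_sum_smul]

lemma coord_ones (A : Finset ℕ) (n : ℕ) :
    B.coord n (B.ones A) = if n ∈ A then 1 else 0 := by
  have : B.ones A = ∑ i ∈ A, (fun _ => (1:𝕜)) i • B.e i := by
    simp [BasisOf.ones]
  rw [this, coord_sum_smul]

lemma coord_sgnSum (ε : ℕ → 𝕜) (A : Finset ℕ) (n : ℕ) :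
    B.coord n (B.sgnSum ε A) = if n ∈ A then ε n else 0 := by
  rw [BasisOf.sgnSum, coord_sum_smul]

lemma proj_congr {A : Finset ℕ} {u v : X} (h : ∀ n ∈ A, B.coord n u = B.coord n v) :
    B.proj A u = B.proj A v := by
  unfold BasisOf.proj
  exact Finset.sum_congr rfl fun n hn => by rw [h n hn]

lemma proj_union {A D : Finset ℕ} (h : Disjoint A D) (x : X) :
    B.proj (A ∪ D) x = B.proj A x + B.proj D x := Finset.sum_union h

lemma coord_sub_proj (D : Finset ℕ) (x : X) (n : ℕ) :
    B.coord n (x - B.proj D x) = if n ∈ D then 0 else B.coord n x := by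
  rw [map_sub, coord_proj]
  by_cases h : n ∈ D <;> simp [h]

end Aux

section Aux2

open Finset

variable {𝕜 : Type*} {X : Type*} [RCLike 𝕜] [NormedAddCommGroup X] [NormedSpace 𝕜 X]
variable (B : BasisOf 𝕜 X) {seq : ℕ → ℕ}

lemma intervalSet_card (hseq : StrictMono seq) (k m : ℕ) :
    (intervalSet seq k m).card = m := by
  have hinj : Function.Injective fun i => seq (k + i) :=
    fun a b h => by have := hseq.injective h; omega
  rw [intervalSet, Finset.card_image_of_injective _ hinj, Finset.card_range]

lemma mem_intervalSet {k m n : ℕ} :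
    n ∈ intervalSet seq k m ↔ ∃ i < m, seq (k + i) = n := by
  unfold intervalSet
  rw [Finset.mem_image]
  simp only [Finset.mem_range]

lemma intervalSet_subset_range (k m : ℕ) :
    (↑(intervalSet seq k m) : Set ℕ) ⊆ Set.range seq := by
  intro n hn
  obtain ⟨i, _, rfl⟩ := mem_intervalSet.1 hn
  exact ⟨k + i, rfl⟩

lemma le_of_mem_intervalSet (hseq : StrictMono seq) {k m n : ℕ}
    (hn : n ∈ intervalSet seq k m) : k ≤ n := by
  obtain ⟨i, _, rfl⟩ := mem_intervalSet.1 hn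
  calc k ≤ k + i := Nat.le_add_right k i
  _ ≤ seq (k + i) := hseq.le_apply

lemma lt_of_mem_intervalSet (hseq : StrictMono seq) {k m n : ℕ}
    (hn : n ∈ intervalSet seq k m) : n < seq (k + m) := by
  obtain ⟨i, hi, rfl⟩ := mem_intervalSet.1 hn
  exact hseq (by omega)

/-- Coordinates of any vector tend to zero. -/
lemma coords_small (x : X) {ε : ℝ} (hε : 0 < ε) :
    ∃ N : ℕ, ∀ n, N ≤ n → ‖B.coord n x‖ ≤ ε := by
  obtain ⟨c₁, c₂, hc₁, hlow, hhigh⟩ := B.norm_bounds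
  have hc₂ : 0 < c₂ := lt_of_lt_of_le hc₁ ((hlow 0).1.trans (hhigh 0).1)
  have : ∃ y ∈ (↑(Submodule.span 𝕜 (Set.range B.e)) : Set X), dist x y < ε / c₂ :=
    Metric.mem_closure_iff.1 (by rw [B.dense_span.closure_eq]; trivial) _
      (div_pos hε hc₂)
  obtain ⟨y, hy, hxy⟩ := this
  rw [SetLike.mem_coe, Finsupp.mem_span_range_iff_exists_finsupp] at hy
  obtain ⟨c, rfl⟩ := hy
  refine ⟨(c.support.sup id) + 1, fun n hn => ?_⟩
  have hns : n ∉ c.support := by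
    intro h
    have := Finset.le_sup (f := id) h
    simp only [id] at this
    omega
  have hcy : B.coord n (c.sum fun i a => a • B.e i) = 0 := by
    rw [Finsupp.sum, coord_sum_smul]
    simp [hns]
  have : ‖B.coord n x‖ = ‖B.coord n (x - c.sum fun i a => a • B.e i)‖ := by
    rw [map_sub, hcy, sub_zero]
  rw [this]
  calc ‖B.coord n (x - c.sum fun i a => a • B.e i)‖
      ≤ ‖B.coord n‖ * ‖x - c.sum fun i a => a • B.e i‖ := (B.coord n).le_opNorm _
    _ ≤ c₂ * (ε / c₂) := by
        apply mul_le_mul (hhigh n).2 _ (norm_nonneg _) (le_of_lt hc₂)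
        rw [← dist_eq_norm]
        exact le_of_lt hxy
    _ = ε := by field_simp

/-- Far-out projections on intervals are small. -/
lemma proj_interval_small (hseq : StrictMono seq) (x : X) (m : ℕ) {ε : ℝ} (hε : 0 < ε) :
    ∃ k₀ : ℕ, ∀ k, k₀ ≤ k → ‖B.proj (intervalSet seq k m) x‖ ≤ ε := by
  obtain ⟨c₁, c₂, hc₁, hlow, hhigh⟩ := B.norm_bounds
  have hc₂ : 0 < c₂ := lt_of_lt_of_le hc₁ ((hlow 0).1.trans (hhigh 0).1)
  have hpos : 0 < ε / ((m + 1) * c₂) := by positivity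
  obtain ⟨N, hN⟩ := coords_small B x hpos
  refine ⟨N, fun k hk => ?_⟩
  calc ‖B.proj (intervalSet seq k m) x‖
      ≤ ∑ n ∈ intervalSet seq k m, ‖B.coord n x • B.e n‖ := norm_sum_le _ _
    _ ≤ ∑ _n ∈ intervalSet seq k m, (ε / ((m + 1) * c₂)) * c₂ := by
        apply Finset.sum_le_sum
        intro n hn
        rw [norm_smul]
        apply mul_le_mul _ (hhigh n).1 (norm_nonneg _) (le_of_lt hpos)
        exact hN n (hk.trans (le_of_mem_intervalSet hseq hn))
    _ = (intervalSet seq k m).card * ((ε / ((m + 1) * c₂)) * c₂) := by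
        rw [Finset.sum_const, nsmul_eq_mul]
    _ ≤ ε := by
        rw [intervalSet_card hseq]
        have hm1 : (0:ℝ) < (m:ℝ) + 1 := by positivity
        have key : (m:ℝ) * (ε / (((m:ℝ)+1)*c₂) * c₂) = ε * m / ((m:ℝ)+1) := by
          field_simp
        rw [key, div_le_iff₀ hm1]
        nlinarith [hε.le]

end Aux2

section Aux3

open Finset

variable {𝕜 : Type*} {X : Type*} [RCLike 𝕜] [NormedAddCommGroup X] [NormedSpace 𝕜 X]
variable (B : BasisOf 𝕜 X) {seq : ℕ → ℕ}

/-- Suppression quasi-greedy property, from CAGI. -/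
lemma suppQG {C : ℝ} (hseq : StrictMono seq) (hC1 : 1 ≤ C) (hC : B.CAGIWith seq C)
    (y : X) (G : Finset ℕ) (hGne : G.Nonempty) (hG : B.IsGreedySet y G) :
    ‖y - B.proj G y‖ ≤ C * ‖y‖ := by
  apply le_of_forall_pos_le_add
  intro ε hε
  have hC0 : 0 < C := lt_of_lt_of_le one_pos hC1
  obtain ⟨k₀, hk₀⟩ := proj_interval_small B hseq y G.card (ε := ε / C) (by positivity)
  have h := hC y G.card (Finset.card_pos.2 hGne) G rfl hG k₀
  calc ‖y - B.proj G y‖ ≤ C * ‖y - B.proj (intervalSet seq k₀ G.card) y‖ := h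
    _ ≤ C * (‖y‖ + ε / C) := by
        apply mul_le_mul_of_nonneg_left _ hC0.le
        calc ‖y - B.proj (intervalSet seq k₀ G.card) y‖
            ≤ ‖y‖ + ‖B.proj (intervalSet seq k₀ G.card) y‖ := norm_sub_le _ _
          _ ≤ ‖y‖ + ε / C := by
              have := hk₀ k₀ le_rfl
              linarith
    _ = C * ‖y‖ + ε := by field_simp

/-- Existence of a "top slice" of `G` of cardinality `s` with respect to a real key. -/
lemma top_slice (f : ℕ → ℝ) (G : Finset ℕ) :
    ∀ s, s ≤ G.card → ∃ G' ⊆ G, G'.card = s ∧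
      ∀ i ∈ G', ∀ j ∈ G \ G', f j ≤ f i := by
  intro s
  induction s with
  | zero => intro _; exact ⟨∅, Finset.empty_subset _, rfl, by simp⟩
  | succ s ih =>
    intro hs
    obtain ⟨G', hG'sub, hG'card, hG'top⟩ := ih (Nat.le_of_succ_le hs)
    have hne : (G \ G').Nonempty := by
      rw [← Finset.card_pos, Finset.card_sdiff_of_subset hG'sub]
      omega
    obtain ⟨a, ha, hamax⟩ := Finset.exists_max_image (G \ G') f hne
    refine ⟨insert a G', ?_, ?_, ?_⟩
    · exact Finset.insert_subset (Finset.mem_sdiff.1 ha).1 hG'sub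
    · rw [Finset.card_insert_of_notMem (Finset.mem_sdiff.1 ha).2, hG'card]
    · intro i hi j hj
      have hj' : j ∈ G \ G' := by
        rw [Finset.mem_sdiff] at hj ⊢
        exact ⟨hj.1, fun h => hj.2 (Finset.mem_insert_of_mem h)⟩
      rcases Finset.mem_insert.1 hi with rfl | hi'
      · exact hamax j hj'
      · exact hG'top i hi' j hj'

/-- Convexity lemma: coefficients in `[0,1]` are dominated by subset sums. -/
lemma convexity_bound (E : Finset ℕ) :
    ∀ (w₀ : X) (v : ℕ → X) (M : ℝ),
      (∀ S ⊆ E, ‖w₀ + ∑ n ∈ S, v n‖ ≤ M) →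
      ∀ c : ℕ → ℝ, (∀ n ∈ E, 0 ≤ c n ∧ c n ≤ 1) →
        ‖w₀ + ∑ n ∈ E, ((c n : 𝕜) • v n)‖ ≤ M := by
  induction E using Finset.induction_on with
  | empty => intro w₀ v M hM c _; simpa using hM ∅ (Finset.empty_subset _)
  | @insert a E' ha ih =>
    intro w₀ v M hM c hc
    have hca := hc a (Finset.mem_insert_self a E')
    have h1 : ‖w₀ + v a + ∑ n ∈ E', ((c n : 𝕜) • v n)‖ ≤ M := by
      apply ih (w₀ + v a) v M
      · intro S hS
        have : w₀ + v a + ∑ n ∈ S, v n = w₀ + ∑ n ∈ insert a S, v n := by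
          rw [Finset.sum_insert (fun h => ha (hS h))]
          abel
        rw [this]
        exact hM _ (Finset.insert_subset_insert a hS)
      · intro n hn; exact hc n (Finset.mem_insert_of_mem hn)
    have h2 : ‖w₀ + ∑ n ∈ E', ((c n : 𝕜) • v n)‖ ≤ M := by
      apply ih w₀ v M
      · intro S hS; exact hM S (hS.trans (Finset.subset_insert a E'))
      · intro n hn; exact hc n (Finset.mem_insert_of_mem hn)
    rw [Finset.sum_insert ha]
    have key : w₀ + (((c a : ℝ) : 𝕜) • v a + ∑ n ∈ E', ((c n : 𝕜) • v n)) =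
        ((c a : ℝ) : 𝕜) • (w₀ + v a + ∑ n ∈ E', ((c n : 𝕜) • v n)) +
        ((1 - c a : ℝ) : 𝕜) • (w₀ + ∑ n ∈ E', ((c n : 𝕜) • v n)) := by
      push_cast
      module
    rw [key]
    calc ‖_ + _‖ ≤ ‖((c a : ℝ) : 𝕜) • (w₀ + v a + ∑ n ∈ E', ((c n : 𝕜) • v n))‖ +
        ‖((1 - c a : ℝ) : 𝕜) • (w₀ + ∑ n ∈ E', ((c n : 𝕜) • v n))‖ := norm_add_le _ _
      _ ≤ c a * M + (1 - c a) * M := by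
          apply add_le_add
          · rw [norm_smul, RCLike.norm_ofReal, abs_of_nonneg hca.1]
            exact mul_le_mul_of_nonneg_left h1 hca.1
          · rw [norm_smul, RCLike.norm_ofReal, abs_of_nonneg (by linarith [hca.2])]
            exact mul_le_mul_of_nonneg_left h2 (by linarith [hca.2])
      _ = M := by ring

end Aux3

section Aux4

open Finset

variable {𝕜 : Type*} {X : Type*} [RCLike 𝕜] [NormedAddCommGroup X] [NormedSpace 𝕜 X]
variable (B : BasisOf 𝕜 X) {seq : ℕ → ℕ}

lemma seq_le_of_mem_intervalSet (hseq : StrictMono seq) {k m n : ℕ}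
    (hn : n ∈ intervalSet seq k m) : seq k ≤ n := by
  obtain ⟨i, _, rfl⟩ := mem_intervalSet.1 hn
  exact hseq.monotone (Nat.le_add_right k i)

lemma proj_eq_ones {W : Finset ℕ} {z : X} (h : ∀ n ∈ W, B.coord n z = 1) :
    B.proj W z = B.ones W := by
  unfold BasisOf.proj BasisOf.ones
  exact Finset.sum_congr rfl fun n hn => by rw [h n hn, one_smul]

lemma proj_eq_sgnSum {W : Finset ℕ} {z : X} {δ : ℕ → 𝕜} (h : ∀ n ∈ W, B.coord n z = δ n) :
    B.proj W z = B.sgnSum δ W := by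
  unfold BasisOf.proj BasisOf.sgnSum
  exact Finset.sum_congr rfl fun n hn => by rw [h n hn]

/-- Lemma A: a sign combination over a subset of the sequence is dominated by
far-out intervals of the same cardinality. -/
lemma sgnSum_le_far_interval {C : ℝ} (hseq : StrictMono seq) (hC : B.CAGIWith seq C)
    {S : Finset ℕ} (hSr : (↑S : Set ℕ) ⊆ Set.range seq) (hSne : S.Nonempty)
    {δ : ℕ → 𝕜} (hδ : ∀ n ∈ S, ‖δ n‖ = 1) :
    ∃ R : ℕ, 1 ≤ R ∧ ∀ k, R ≤ k →
      ‖B.sgnSum δ S‖ ≤ C * ‖B.ones (intervalSet seq k S.card)‖ := by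
  classical
  set idx : ℕ → ℕ := fun n => sInf {i | seq i = n} with hidx
  set R : ℕ := S.sup idx + 1 with hR
  have hseqidx : ∀ n ∈ S, seq (idx n) = n := by
    intro n hn
    have : {i | seq i = n}.Nonempty := hSr hn
    exact Nat.sInf_mem this
  set Istar : Finset ℕ := intervalSet seq 0 R with hIstar
  have hSI : S ⊆ Istar := by
    intro n hn
    apply mem_intervalSet.2
    refine ⟨idx n, ?_, by rw [Nat.zero_add]; exact hseqidx n hn⟩
    have := Finset.le_sup (f := idx) hn
    omega
  have hIcard : Istar.card = R := intervalSet_card hseq 0 R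
  have hsR : S.card ≤ R := hIcard ▸ Finset.card_le_card hSI
  refine ⟨R, Nat.le_add_left 1 _, fun k hk => ?_⟩
  set s := S.card with hs
  set K : Finset ℕ := intervalSet seq k s with hK
  have hdisjIK : Disjoint Istar K := by
    rw [Finset.disjoint_left]
    intro n hnI hnK
    have h1 : n < seq (0 + R) := lt_of_mem_intervalSet hseq hnI
    have h2 : seq k ≤ n := seq_le_of_mem_intervalSet hseq hnK
    have h3 : seq R ≤ seq k := hseq.monotone hk
    rw [Nat.zero_add] at h1
    omega
  have hdisjSK : Disjoint S K := Finset.disjoint_of_subset_left hSI hdisjIK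
  have hdisjSI : Disjoint S (Istar \ S) := Finset.disjoint_sdiff
  have hdisjIsK : Disjoint (Istar \ S) K :=
    Finset.disjoint_of_subset_left (Finset.sdiff_subset) hdisjIK
  set z : X := B.sgnSum δ S + (B.ones (Istar \ S) + B.ones K) with hz
  have hcoord : ∀ n, B.coord n z = (if n ∈ S then δ n else 0) +
      ((if n ∈ Istar \ S then 1 else 0) + (if n ∈ K then 1 else 0)) := by
    intro n
    rw [hz, map_add, map_add, coord_sgnSum, coord_ones, coord_ones]
  set F : Finset ℕ := (Istar \ S) ∪ K with hF
  have hFS : Disjoint F S := by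
    rw [Finset.disjoint_union_left]
    exact ⟨hdisjSI.symm, hdisjSK.symm⟩
  have hcoordF : ∀ n ∈ F, B.coord n z = 1 := by
    intro n hn
    have hnS : n ∉ S := Finset.disjoint_left.1 hFS hn
    rcases Finset.mem_union.1 hn with h | h
    · have hnK : n ∉ K := Finset.disjoint_left.1 hdisjIsK h
      rw [hcoord]
      simp [hnS, h, hnK]
    · have hnI : n ∉ Istar \ S := fun h' => Finset.disjoint_left.1 hdisjIsK h' h
      rw [hcoord]
      simp [hnS, h, hnI]
  have hcoordS : ∀ n ∈ S, B.coord n z = δ n := by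
    intro n hn
    have h1 : n ∉ Istar \ S := fun h' => (Finset.mem_sdiff.1 h').2 hn
    have h2 : n ∉ K := Finset.disjoint_left.1 hdisjSK hn
    rw [hcoord]
    simp [hn, h1, h2]
  have hcoord0 : ∀ n, n ∉ F → n ∉ S → B.coord n z = 0 := by
    intro n hnF hnS
    have h1 : n ∉ Istar \ S := fun h => hnF (Finset.mem_union_left _ h)
    have h2 : n ∉ K := fun h => hnF (Finset.mem_union_right _ h)
    rw [hcoord]
    simp [hnS, h1, h2]
  have hFcard : F.card = R := by
    rw [hF, Finset.card_union_of_disjoint hdisjIsK, Finset.card_sdiff_of_subset hSI, hIcard,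
      intervalSet_card hseq]
    omega
  have hgreedy : B.IsGreedySet z F := by
    intro a ha b hb
    rw [hcoordF a ha]
    by_cases hbS : b ∈ S
    · rw [hcoordS b hbS, hδ b hbS]; norm_num
    · rw [hcoord0 b hb hbS]; norm_num
  have hcagi := hC z R (Nat.le_add_left 1 _) F hFcard hgreedy 0
  have hPF : B.proj F z = B.ones (Istar \ S) + B.ones K := by
    rw [hF, proj_union B hdisjIsK]
    congr 1
    · exact proj_eq_ones B fun n hn => hcoordF n (Finset.mem_union_left _ hn)
    · exact proj_eq_ones B fun n hn => hcoordF n (Finset.mem_union_right _ hn)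
  have hPI : B.proj Istar z = B.sgnSum δ S + B.ones (Istar \ S) := by
    have hsplit : Istar = S ∪ (Istar \ S) := (Finset.union_sdiff_of_subset hSI).symm
    conv_lhs => rw [hsplit]
    rw [proj_union B hdisjSI, proj_eq_sgnSum B hcoordS,
      proj_eq_ones B fun n hn => hcoordF n (Finset.mem_union_left _ hn)]
  have e1 : z - B.proj F z = B.sgnSum δ S := by rw [hPF, hz]; abel
  have e2 : z - B.proj (intervalSet seq 0 R) z = B.ones K := by
    have : intervalSet seq 0 R = Istar := rfl
    rw [this, hPI, hz]; abel
  rw [e1, e2] at hcagi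
  exact hcagi

end Aux4

section Aux5

open Finset

variable {𝕜 : Type*} {X : Type*} [RCLike 𝕜] [NormedAddCommGroup X] [NormedSpace 𝕜 X]
variable (B : BasisOf 𝕜 X) {seq : ℕ → ℕ}

/-- Truncation bound: `t`-multiples of far intervals are dominated by `‖y‖` when `y`
has a greedy set with coordinates of size `≥ t` of the relevant cardinality. -/
lemma trunc_bound {C : ℝ} (hseq : StrictMono seq) (hC1 : 1 ≤ C) (hC : B.CAGIWith seq C)
    (y : X) (A' : Finset ℕ) (t : ℝ) (ht : 0 ≤ t)
    (hmin : ∀ a ∈ A', t ≤ ‖B.coord a y‖) (hout : ∀ b, b ∉ A' → ‖B.coord b y‖ ≤ t)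
    {s : ℕ} (hs1 : 1 ≤ s) (hsA : s ≤ A'.card) {k : ℕ}
    (hdisj : Disjoint A' (intervalSet seq k s)) :
    t * ‖B.ones (intervalSet seq k s)‖ ≤
      2 * C * ‖y‖ + (C + 1) * ‖B.proj (intervalSet seq k s) y‖ := by
  classical
  set K : Finset ℕ := intervalSet seq k s with hK
  obtain ⟨A'', hA''sub, hA''card, hA''top⟩ :=
    top_slice (fun n => ‖B.coord n y‖) A' s hsA
  have hA''ne : A''.Nonempty := Finset.card_pos.1 (by omega)
  have hdisj'' : Disjoint A'' K := Finset.disjoint_of_subset_left hA''sub hdisj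
  have hmin'' : ∀ a ∈ A'', t ≤ ‖B.coord a y‖ := fun a ha => hmin a (hA''sub ha)
  have hcmp : ∀ a ∈ A'', ∀ b, b ∉ A'' → ‖B.coord b y‖ ≤ ‖B.coord a y‖ := by
    intro a ha b hb
    by_cases hbA : b ∈ A'
    · exact hA''top a ha b (Finset.mem_sdiff.2 ⟨hbA, hb⟩)
    · exact (hout b hbA).trans (hmin'' a ha)
  have hgy : B.IsGreedySet y A'' := fun a ha b hb => hcmp a ha b hb
  set ζ : X := (y - B.proj K y) + ((t : 𝕜)) • B.ones K with hζ
  have hcoordζ : ∀ n, B.coord n ζ = if n ∈ K then (t : 𝕜) else B.coord n y := by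
    intro n
    rw [hζ, map_add, map_smul, coord_sub_proj, coord_ones, smul_eq_mul]
    by_cases h : n ∈ K <;> simp [h]
  have hcoordyK : ∀ n, n ∉ K → B.coord n ζ = B.coord n y := by
    intro n hn; rw [hcoordζ]; simp [hn]
  have hgζ : B.IsGreedySet ζ A'' := by
    intro a ha b hb
    have haK : a ∉ K := Finset.disjoint_left.1 hdisj'' ha
    rw [hcoordyK a haK]
    by_cases hbK : b ∈ K
    · rw [hcoordζ]
      simp only [hbK, if_pos]
      rw [RCLike.norm_ofReal, abs_of_nonneg ht]
      exact hmin'' a ha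
    · rw [hcoordyK b hbK]
      exact hcmp a ha b hb
  have hcagi := hC ζ s hs1 A'' hA''card hgζ k
  have hPK : B.proj K ζ = ((t : 𝕜)) • B.ones K := by
    unfold BasisOf.proj BasisOf.ones
    rw [Finset.smul_sum]
    exact Finset.sum_congr rfl fun n hn => by rw [hcoordζ]; simp [hn]
  have hPA : B.proj A'' ζ = B.proj A'' y :=
    proj_congr B fun n hn => hcoordyK n (Finset.disjoint_left.1 hdisj'' hn)
  have e1 : ζ - B.proj K ζ = y - B.proj K y := by rw [hPK, hζ]; abel
  have e2 : ((t : 𝕜)) • B.ones K =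
      (ζ - B.proj A'' ζ) - (y - B.proj A'' y) + B.proj K y := by
    rw [hPA, hζ]; abel
  have hsupp : ‖y - B.proj A'' y‖ ≤ C * ‖y‖ := suppQG B hseq hC1 hC y A'' hA''ne hgy
  have ht1 : t * ‖B.ones K‖ = ‖((t : 𝕜)) • B.ones K‖ := by
    rw [norm_smul, RCLike.norm_ofReal, abs_of_nonneg ht]
  rw [ht1, e2]
  have hbound : ‖(ζ - B.proj A'' ζ) - (y - B.proj A'' y) + B.proj K y‖ ≤
      ‖ζ - B.proj A'' ζ‖ + ‖y - B.proj A'' y‖ + ‖B.proj K y‖ := by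
    calc ‖(ζ - B.proj A'' ζ) - (y - B.proj A'' y) + B.proj K y‖
        ≤ ‖(ζ - B.proj A'' ζ) - (y - B.proj A'' y)‖ + ‖B.proj K y‖ := norm_add_le _ _
      _ ≤ ‖ζ - B.proj A'' ζ‖ + ‖y - B.proj A'' y‖ + ‖B.proj K y‖ := by
          have := norm_sub_le (ζ - B.proj A'' ζ) (y - B.proj A'' y)
          linarith
  have hclose : ‖ζ - B.proj A'' ζ‖ ≤ C * (‖y‖ + ‖B.proj K y‖) := by
    calc ‖ζ - B.proj A'' ζ‖ ≤ C * ‖ζ - B.proj K ζ‖ := hcagi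
      _ = C * ‖y - B.proj K y‖ := by rw [e1]
      _ ≤ C * (‖y‖ + ‖B.proj K y‖) := by
          apply mul_le_mul_of_nonneg_left (norm_sub_le _ _) (by linarith)
  calc ‖(ζ - B.proj A'' ζ) - (y - B.proj A'' y) + B.proj K y‖
      ≤ ‖ζ - B.proj A'' ζ‖ + ‖y - B.proj A'' y‖ + ‖B.proj K y‖ := hbound
    _ ≤ C * (‖y‖ + ‖B.proj K y‖) + C * ‖y‖ + ‖B.proj K y‖ := by linarith
    _ = 2 * C * ‖y‖ + (C + 1) * ‖B.proj K y‖ := by ring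

end Aux5

section Aux6

open Finset

variable {𝕜 : Type*} {X : Type*} [RCLike 𝕜] [NormedAddCommGroup X] [NormedSpace 𝕜 X]
variable (B : BasisOf 𝕜 X) {seq : ℕ → ℕ}

lemma exists_sign (x : X) : ∃ δ : ℕ → 𝕜, (∀ n, ‖δ n‖ = 1) ∧
    ∀ n, ((‖B.coord n x‖ : ℝ) : 𝕜) * δ n = B.coord n x := by
  classical
  refine ⟨fun n => if B.coord n x = 0 then 1 else ((‖B.coord n x‖ : ℝ) : 𝕜)⁻¹ * B.coord n x,
    fun n => ?_, fun n => ?_⟩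
  · by_cases h : B.coord n x = 0
    · simp [h]
    · simp only [h, if_false]
      rw [norm_mul, norm_inv, RCLike.norm_ofReal, abs_of_nonneg (norm_nonneg _),
        inv_mul_cancel₀ (norm_ne_zero_iff.2 h)]
  · by_cases h : B.coord n x = 0
    · simp [h]
    · simp only [h, if_false]
      have hne : ((‖B.coord n x‖ : ℝ) : 𝕜) ≠ 0 := by
        simp only [ne_eq, RCLike.ofReal_eq_zero, norm_eq_zero]
        exact h
      rw [← mul_assoc, mul_inv_cancel₀ hne, one_mul]

/-- Main implication: consecutive almost greedy (type I) implies almost greedy. -/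
lemma cagi_to_ag {C : ℝ} (hseq : StrictMono seq) (hC1 : 1 ≤ C) (hC : B.CAGIWith seq C) :
    B.AlmostGreedyWith seq (C + 2 * C ^ 2) := by
  classical
  intro x m hm A hA hAg D hDr hD
  have hC0 : 0 < C := lt_of_lt_of_le one_pos hC1
  set y : X := x - B.proj D x with hy
  have hcoordy : ∀ n, B.coord n y = if n ∈ D then 0 else B.coord n x :=
    coord_sub_proj B D x
  set A' : Finset ℕ := A \ D with hA'
  set E : Finset ℕ := D \ A with hE
  have hcards : E.card = A'.card := by
    rw [hE, hA']
    have h1 := Finset.card_sdiff_add_card_inter A D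
    have h2 := Finset.card_sdiff_add_card_inter D A
    rw [Finset.inter_comm D A] at h2
    omega
  by_cases hEne : E = ∅
  · -- then A = D and the estimate is trivial
    have hDA : D ⊆ A := Finset.sdiff_eq_empty_iff_subset.1 hEne
    have hAD : A = D := (Finset.eq_of_subset_of_card_le hDA (by omega)).symm
    rw [hAD]
    nlinarith [norm_nonneg (x - B.proj D x)]
  · have hEne' : E.Nonempty := Finset.nonempty_iff_ne_empty.2 hEne
    have hA'ne : A'.Nonempty := by
      rw [← Finset.card_pos, ← hcards, Finset.card_pos]
      exact hEne'
    -- A' is a greedy set of y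
    have hA'y : ∀ a ∈ A', B.coord a y = B.coord a x := by
      intro a ha
      rw [hcoordy]
      simp [(Finset.mem_sdiff.1 ha).2]
    have houtA : ∀ b, b ∉ A' → b ∉ D → b ∉ A := by
      intro b hb hbD hbA
      exact hb (Finset.mem_sdiff.2 ⟨hbA, hbD⟩)
    obtain ⟨a₀, ha₀, ha₀min⟩ := Finset.exists_min_image A' (fun n => ‖B.coord n y‖) hA'ne
    set t : ℝ := ‖B.coord a₀ y‖ with htdef
    have ht0 : 0 ≤ t := norm_nonneg _
    have hmin : ∀ a ∈ A', t ≤ ‖B.coord a y‖ := fun a ha => ha₀min a ha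
    have hout : ∀ b, b ∉ A' → ‖B.coord b y‖ ≤ t := by
      intro b hb
      by_cases hbD : b ∈ D
      · rw [hcoordy]
        simp only [hbD, if_pos, norm_zero]
        exact ht0
      · have hbA : b ∉ A := houtA b hb hbD
        rw [hcoordy]
        simp only [hbD, if_neg, if_false]
        have := hAg a₀ (Finset.mem_sdiff.1 (hA' ▸ ha₀)).1 b hbA
        rw [htdef, hA'y a₀ ha₀]
        exact this
    have hEt : ∀ n ∈ E, ‖B.coord n x‖ ≤ t := by
      intro n hn
      have hnA : n ∉ A := (Finset.mem_sdiff.1 hn).2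
      have := hAg a₀ (Finset.mem_sdiff.1 (hA' ▸ ha₀)).1 n hnA
      rw [htdef, hA'y a₀ ha₀]
      exact this
    -- decomposition
    have hdisjE : Disjoint E (A ∩ D) := by
      rw [hE, Finset.inter_comm]
      exact Finset.disjoint_sdiff_inter D A
    have hdisjA' : Disjoint A' (A ∩ D) := by
      rw [hA']
      exact Finset.disjoint_sdiff_inter A D
    have hprojDx : B.proj D x = B.proj E x + B.proj (A ∩ D) x := by
      have hsplit : D = E ∪ (A ∩ D) := by
        rw [hE, Finset.inter_comm]
        exact (Finset.sdiff_union_inter D A).symm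
      conv_lhs => rw [hsplit]
      exact proj_union B hdisjE x
    have hprojAx : B.proj A x = B.proj A' x + B.proj (A ∩ D) x := by
      have hsplit : A = A' ∪ (A ∩ D) := by
        rw [hA']
        exact (Finset.sdiff_union_inter A D).symm
      conv_lhs => rw [hsplit]
      exact proj_union B hdisjA' x
    have hprojA'y : B.proj A' y = B.proj A' x :=
      proj_congr B fun n hn => hA'y n hn
    have hdecomp : x - B.proj A x = (y - B.proj A' y) + B.proj E x := by
      rw [hprojAx, hprojA'y, hy, hprojDx]
      abel
    -- suppression bound for the y - P_{A'} y part
    have hgA'y : B.IsGreedySet y A' := by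
      intro a ha b hb
      exact (hout b hb).trans (hmin a ha)
    have hyA' : ‖y - B.proj A' y‖ ≤ C * ‖y‖ :=
      suppQG B hseq hC1 hC y A' hA'ne hgA'y
    -- bound for P_E x
    have hEbound : ‖B.proj E x‖ ≤ 2 * C ^ 2 * ‖y‖ := by
      by_cases htz : t = 0
      · have : B.proj E x = 0 := by
          unfold BasisOf.proj
          apply Finset.sum_eq_zero
          intro n hn
          have : ‖B.coord n x‖ ≤ 0 := htz ▸ hEt n hn
          have : B.coord n x = 0 := norm_le_zero_iff.1 this
          rw [this, zero_smul]
        rw [this, norm_zero]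
        positivity
      · have htpos : 0 < t := lt_of_le_of_ne ht0 (Ne.symm htz)
        obtain ⟨δ, hδnorm, hδval⟩ := exists_sign B x
        set v : ℕ → X := fun n => ((t : 𝕜)) • (δ n • B.e n) with hv
        have hsubsets : ∀ S ⊆ E, ‖(0 : X) + ∑ n ∈ S, v n‖ ≤ 2 * C ^ 2 * ‖y‖ := by
          intro S hSE
          rw [zero_add]
          rcases Finset.eq_empty_or_nonempty S with rfl | hSne
          · simp; positivity
          · have hsum : ∑ n ∈ S, v n = ((t : 𝕜)) • B.sgnSum δ S := by
              rw [BasisOf.sgnSum, Finset.smul_sum]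
            rw [hsum, norm_smul, RCLike.norm_ofReal, abs_of_nonneg ht0]
            set s := S.card with hscard
            have hs1 : 1 ≤ s := Finset.card_pos.2 hSne
            have hsA : s ≤ A'.card := by
              rw [← hcards]
              exact Finset.card_le_card hSE
            have hSr : (↑S : Set ℕ) ⊆ Set.range seq := by
              intro n hn
              exact hDr (Finset.mem_coe.2 (Finset.sdiff_subset (hSE hn)))
            obtain ⟨R, hR1, hRfar⟩ := sgnSum_le_far_interval B hseq hC hSr hSne
              (fun n _ => hδnorm n)
            apply le_of_forall_pos_le_add
            intro ε hε
            have hε' : 0 < ε / (C * (C + 1)) := by positivity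
            obtain ⟨k₀, hk₀⟩ := proj_interval_small B hseq y s hε'
            set k₁ : ℕ := (A'.sup id) + 1 with hk₁
            set k := max R (max k₀ k₁) with hkdef
            have hkR : R ≤ k := le_max_left _ _
            have hkk₀ : k₀ ≤ k := le_trans (le_max_left _ _) (le_max_right _ _)
            have hkk₁ : k₁ ≤ k := le_trans (le_max_right _ _) (le_max_right _ _)
            have hdisj : Disjoint A' (intervalSet seq k s) := by
              rw [Finset.disjoint_left]
              intro a ha hk'
              have h1 : k ≤ a := le_of_mem_intervalSet hseq hk'
              have h2 : a ≤ A'.sup id := Finset.le_sup (f := id) ha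
              omega
            have hA1 := hRfar k hkR
            have hA2 := trunc_bound B hseq hC1 hC y A' t ht0 hmin hout hs1 hsA hdisj
            have hA3 : ‖B.proj (intervalSet seq k s) y‖ ≤ ε / (C * (C + 1)) :=
              hk₀ k hkk₀
            calc t * ‖B.sgnSum δ S‖ ≤ t * (C * ‖B.ones (intervalSet seq k s)‖) :=
                  mul_le_mul_of_nonneg_left hA1 ht0
              _ = C * (t * ‖B.ones (intervalSet seq k s)‖) := by ring
              _ ≤ C * (2 * C * ‖y‖ + (C + 1) * (ε / (C * (C + 1)))) := by
                  apply mul_le_mul_of_nonneg_left _ hC0.le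
                  calc t * ‖B.ones (intervalSet seq k s)‖
                      ≤ 2 * C * ‖y‖ + (C + 1) * ‖B.proj (intervalSet seq k s) y‖ := hA2
                    _ ≤ 2 * C * ‖y‖ + (C + 1) * (ε / (C * (C + 1))) := by
                        apply add_le_add le_rfl
                        exact mul_le_mul_of_nonneg_left hA3 (by linarith)
              _ = 2 * C ^ 2 * ‖y‖ + ε := by field_simp
        have hprojE : B.proj E x = (0 : X) + ∑ n ∈ E, (((fun n => ‖B.coord n x‖ / t) n : ℝ) : 𝕜) • v n := by
          rw [zero_add]
          unfold BasisOf.proj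
          apply Finset.sum_congr rfl
          intro n _
          rw [hv]
          simp only
          rw [smul_smul, smul_smul]
          congr 1
          have step : ((‖B.coord n x‖ / t : ℝ) : 𝕜) * ((t : 𝕜) * δ n) =
              ((‖B.coord n x‖ : ℝ) : 𝕜) * δ n := by
            rw [← mul_assoc, ← RCLike.ofReal_mul, div_mul_cancel₀ _ htz]
          rw [mul_assoc, step]
          exact (hδval n).symm
        have := convexity_bound (𝕜 := 𝕜) E 0 v (2 * C ^ 2 * ‖y‖) hsubsets
          (fun n => ‖B.coord n x‖ / t)
          (fun n hn => ⟨by positivity, by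
            rw [div_le_one htpos]
            exact hEt n hn⟩)
        rw [← hprojE] at this
        exact this
    calc ‖x - B.proj A x‖ = ‖(y - B.proj A' y) + B.proj E x‖ := by rw [hdecomp]
      _ ≤ ‖y - B.proj A' y‖ + ‖B.proj E x‖ := norm_add_le _ _
      _ ≤ C * ‖y‖ + 2 * C ^ 2 * ‖y‖ := add_le_add hyA' hEbound
      _ = (C + 2 * C ^ 2) * ‖x - B.proj D x‖ := by rw [← hy]; ring

end Aux6

section Aux7

open Finset

variable {𝕜 : Type*} {X : Type*} [RCLike 𝕜] [NormedAddCommGroup X] [NormedSpace 𝕜 X]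
variable (B : BasisOf 𝕜 X) {seq : ℕ → ℕ}

/-- Almost greedy implies the strengthened consecutive inequality. -/
lemma ag_to_strong {C : ℝ} (hseq : StrictMono seq) (hC1 : 1 ≤ C)
    (hAG : B.AlmostGreedyWith seq C) :
    ∀ x : X, ∀ m : ℕ, 1 ≤ m → ∀ A : Finset ℕ, A.card = m →
      B.IsGreedySet x A → ∀ k' : ℕ, k' ≤ m → ∀ k : ℕ,
        ‖x - B.proj A x‖ ≤ C * ‖x - B.proj (intervalSet seq k k') x‖ := by
  intro x m hm A hA hg k' hk' k
  have hC0 : 0 < C := lt_of_lt_of_le one_pos hC1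
  apply le_of_forall_pos_le_add
  intro ε hε
  obtain ⟨k₀, hk₀⟩ := proj_interval_small B hseq x (m - k') (ε := ε / C) (by positivity)
  set k₂ := max (k + k') k₀ with hk₂
  set I : Finset ℕ := intervalSet seq k k' with hI
  set K : Finset ℕ := intervalSet seq k₂ (m - k') with hK
  have hdisj : Disjoint I K := by
    rw [Finset.disjoint_left]
    intro n hnI hnK
    have h1 : n < seq (k + k') := lt_of_mem_intervalSet hseq hnI
    have h2 : seq k₂ ≤ n := seq_le_of_mem_intervalSet hseq hnK
    have h3 : seq (k + k') ≤ seq k₂ := hseq.monotone (le_max_left _ _)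
    omega
  set D : Finset ℕ := I ∪ K with hD
  have hDcard : D.card = m := by
    rw [hD, Finset.card_union_of_disjoint hdisj, hI, hK, intervalSet_card hseq,
      intervalSet_card hseq]
    omega
  have hDr : (↑D : Set ℕ) ⊆ Set.range seq := by
    rw [hD]
    intro n hn
    rcases Finset.mem_union.1 hn with h | h
    · exact intervalSet_subset_range k k' h
    · exact intervalSet_subset_range k₂ (m - k') h
  have hag := hAG x m hm A hA hg D hDr hDcard
  have hPD : B.proj D x = B.proj I x + B.proj K x := proj_union B hdisj x
  have hKsmall : ‖B.proj K x‖ ≤ ε / C := hk₀ k₂ (le_max_right _ _)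
  calc ‖x - B.proj A x‖ ≤ C * ‖x - B.proj D x‖ := hag
    _ ≤ C * (‖x - B.proj I x‖ + ‖B.proj K x‖) := by
        apply mul_le_mul_of_nonneg_left _ hC0.le
        rw [hPD]
        calc ‖x - (B.proj I x + B.proj K x)‖ = ‖(x - B.proj I x) + (-B.proj K x)‖ := by
              congr 1; abel
          _ ≤ ‖x - B.proj I x‖ + ‖-B.proj K x‖ := norm_add_le _ _
          _ = ‖x - B.proj I x‖ + ‖B.proj K x‖ := by rw [norm_neg]
    _ ≤ C * (‖x - B.proj I x‖ + ε / C) := by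
        apply mul_le_mul_of_nonneg_left _ hC0.le
        linarith
    _ = C * ‖x - B.proj I x‖ + ε := by field_simp

end Aux7
/-- (𝐧, almost greedy) ⟺ the strengthened consecutive inequality
`‖x − G_m(x)‖ ≤ C·min_{0≤k≤m} σ̌^𝐧_k(x)` ⟺ (𝐧, consecutive almost greedy) of type I. -/
theorem statement13 {𝕜 X : Type*} [RCLike 𝕜] [NormedAddCommGroup X] [NormedSpace 𝕜 X]
    [CompleteSpace X] (B : BasisOf 𝕜 X) (seq : ℕ → ℕ) (hseq : StrictMono seq) :
    (B.AlmostGreedy seq ↔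
      ∃ C : ℝ, 1 ≤ C ∧ ∀ x : X, ∀ m : ℕ, 1 ≤ m → ∀ A : Finset ℕ, A.card = m →
        B.IsGreedySet x A → ∀ k' : ℕ, k' ≤ m → ∀ k : ℕ,
          ‖x - B.proj A x‖ ≤ C * ‖x - B.proj (intervalSet seq k k') x‖) ∧
    (B.AlmostGreedy seq ↔ ∃ C : ℝ, 1 ≤ C ∧ B.CAGIWith seq C) := by
  have h12 : B.AlmostGreedy seq →
      ∃ C : ℝ, 1 ≤ C ∧ ∀ x : X, ∀ m : ℕ, 1 ≤ m → ∀ A : Finset ℕ, A.card = m →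
        B.IsGreedySet x A → ∀ k' : ℕ, k' ≤ m → ∀ k : ℕ,
          ‖x - B.proj A x‖ ≤ C * ‖x - B.proj (intervalSet seq k k') x‖ := by
    rintro ⟨C, hC1, hAG⟩
    exact ⟨C, hC1, ag_to_strong B hseq hC1 hAG⟩
  have h23 : (∃ C : ℝ, 1 ≤ C ∧ ∀ x : X, ∀ m : ℕ, 1 ≤ m → ∀ A : Finset ℕ, A.card = m →
      B.IsGreedySet x A → ∀ k' : ℕ, k' ≤ m → ∀ k : ℕ,
        ‖x - B.proj A x‖ ≤ C * ‖x - B.proj (intervalSet seq k k') x‖) →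
      ∃ C : ℝ, 1 ≤ C ∧ B.CAGIWith seq C := by
    rintro ⟨C, hC1, h⟩
    exact ⟨C, hC1, fun x m hm A hA hg k => h x m hm A hA hg m le_rfl k⟩
  have h31 : (∃ C : ℝ, 1 ≤ C ∧ B.CAGIWith seq C) → B.AlmostGreedy seq := by
    rintro ⟨C, hC1, hC⟩
    exact ⟨C + 2 * C ^ 2, by nlinarith, cagi_to_ag B hseq hC1 hC⟩
  exact ⟨⟨h12, fun h => h31 (h23 h)⟩, ⟨fun h => h23 (h12 h), h31⟩⟩
end
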